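/- arXiv:1212.4717 — 6 statements merged into one kernel-verified Lean document; each statement's English description precedes it below -/
import Mathlib

section
/- For every t > 0 and every φ ≥ 0, the Gaussian mean of the one-step update equals the deterministic odds update: ∫_ℝ j(t, φ, z) γ(z) dz = e^{λt}(φ + 1) − 1. -/
open MeasureTheory Real

/-- Standard Gaussian density on ℝ. -/
noncomputable def gaussDensity (z : ℝ) : ℝ := Real.exp (-z ^ 2 / 2) / Real.sqrt (2 * Real.pi)

/-- One-step update of the conditional odds process upon observing a normalized
increment `z` after a waiting time `t`, starting from odds `φ`. -/
noncomputable def jfun (lam alp t φ z : ℝ) : ℝ :=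
  Real.exp (alp * z * Real.sqrt t + (lam - alp ^ 2 / 2) * t) * φ +
    ∫ u in (0:ℝ)..t, lam * Real.exp ((lam + alp * z / Real.sqrt t) * u - alp ^ 2 * u ^ 2 / (2 * t))

lemma exp_mul_gauss_eq (c z : ℝ) :
    Real.exp (c * z) * gaussDensity z
      = Real.exp (c ^ 2 / 2) / Real.sqrt (2 * Real.pi) * Real.exp (-(1/2) * (z - c) ^ 2) := by
  unfold gaussDensity
  rw [mul_div_assoc', ← Real.exp_add, div_mul_eq_mul_div, ← Real.exp_add]
  congr 1
  ring

lemma integrable_exp_neg_half_sq : Integrable (fun z : ℝ => Real.exp (-(1/2) * z ^ 2)) := by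
  simpa using integrable_exp_neg_mul_sq (by norm_num : (0:ℝ) < 1/2)

lemma integrable_exp_mul_gauss (c : ℝ) :
    Integrable (fun z => Real.exp (c * z) * gaussDensity z) := by
  simp only [exp_mul_gauss_eq]
  exact (integrable_exp_neg_half_sq.comp_sub_right c).const_mul _

lemma integral_exp_neg_half_sq :
    ∫ z : ℝ, Real.exp (-(1/2) * z ^ 2) = Real.sqrt (2 * Real.pi) := by
  rw [integral_gaussian]
  congr 1
  rw [div_div_eq_mul_div, div_one]
  ring

lemma integral_exp_mul_gauss (c : ℝ) :
    ∫ z : ℝ, Real.exp (c * z) * gaussDensity z = Real.exp (c ^ 2 / 2) := by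
  simp only [exp_mul_gauss_eq]
  rw [integral_const_mul,
    integral_sub_right_eq_self (μ := volume) (fun z : ℝ => Real.exp (-(1/2) * z ^ 2)) c,
    integral_exp_neg_half_sq]
  have h : Real.sqrt (2 * Real.pi) ≠ 0 :=
    ne_of_gt (Real.sqrt_pos.2 (by positivity))
  field_simp

/-- The Gaussian mean of the one-step update equals the deterministic odds update:
`∫ j(t, φ, z) γ(z) dz = e^{λt}(φ + 1) − 1`. -/
theorem gaussian_mean_jfun (lam alp : ℝ) (hlam : 0 < lam) (halp : 0 < alp)
    (t : ℝ) (ht : 0 < t) (φ : ℝ) (hφ : 0 ≤ φ) :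
    ∫ z : ℝ, jfun lam alp t φ z * gaussDensity z = Real.exp (lam * t) * (φ + 1) - 1 := by
  have hst : 0 < Real.sqrt t := Real.sqrt_pos.2 ht
  have hts : Real.sqrt t ^ 2 = t := Real.sq_sqrt ht.le
  set c : ℝ := alp * Real.sqrt t with hc
  have hcpos : 0 < c := mul_pos halp hst
  set ν : Measure ℝ := volume.restrict (Set.Ioc (0:ℝ) t) with hν
  set g : ℝ → ℝ → ℝ := fun z u =>
    lam * Real.exp ((lam + alp * z / Real.sqrt t) * u - alp ^ 2 * u ^ 2 / (2 * t))
      * gaussDensity z with hg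
  have hγpos : ∀ z, 0 < gaussDensity z := fun z => by
    unfold gaussDensity
    positivity
  -- continuity / measurability of uncurried g
  have hgmeas : AEStronglyMeasurable (Function.uncurry g)
      ((volume : Measure ℝ).prod ν) := by
    apply Continuous.aestronglyMeasurable
    unfold Function.uncurry
    simp only [hg]
    apply Continuous.mul
    · apply continuous_const.mul
      apply Real.continuous_exp.comp
      fun_prop
    · unfold gaussDensity
      fun_prop
  -- integrable bound
  set K : ℝ := lam * Real.exp (lam * t) with hK
  set h : ℝ → ℝ := fun z =>
    Real.exp (c * z) * gaussDensity z + Real.exp (-c * z) * gaussDensity z with hh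
  have hhint : Integrable h := (integrable_exp_mul_gauss c).add (integrable_exp_mul_gauss (-c))
  have hbound_int : Integrable (fun p : ℝ × ℝ => (K * h p.1) * (1:ℝ))
      ((volume : Measure ℝ).prod ν) := by
    have h1 : Integrable (fun _ : ℝ => (1:ℝ)) ν := by
      refine (integrable_const_iff).2 (Or.inr ?_)
      simp [hν, Measure.restrict_apply, ht.le]
      exact ⟨by rw [Measure.restrict_apply_univ]; exact measure_Ioc_lt_top⟩
    exact (hhint.const_mul K).mul_prod h1
  have haeu : ∀ᵐ p : ℝ × ℝ ∂((volume : Measure ℝ).prod ν), p.2 ∈ Set.Ioc (0:ℝ) t := by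
    rw [ae_iff]
    have hset : {p : ℝ × ℝ | ¬ p.2 ∈ Set.Ioc (0:ℝ) t}
        = (Set.univ : Set ℝ) ×ˢ (Set.Ioc (0:ℝ) t)ᶜ := by
      ext p; simp
    rw [hset, Measure.prod_prod]
    have : ν ((Set.Ioc (0:ℝ) t)ᶜ) = 0 := by
      rw [hν, Measure.restrict_apply (measurableSet_Ioc.compl)]
      simp
    rw [this, mul_zero]
  -- pointwise bound
  have hbound : ∀ᵐ p : ℝ × ℝ ∂((volume : Measure ℝ).prod ν),
      ‖Function.uncurry g p‖ ≤ (K * h p.1) * (1:ℝ) := by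
    filter_upwards [haeu] with p hp
    obtain ⟨z, u⟩ := p
    simp only [Set.mem_Ioc] at hp
    have hu0 : 0 < u := hp.1
    have hut : u ≤ t := hp.2
    have hexp_le : (lam + alp * z / Real.sqrt t) * u - alp ^ 2 * u ^ 2 / (2 * t)
        ≤ lam * t + c * |z| := by
      have h1 : lam * u ≤ lam * t := by nlinarith
      have h2 : (alp * z / Real.sqrt t) * u ≤ c * |z| := by
        have ha : 0 ≤ alp * u / Real.sqrt t := by positivity
        have hb : alp * u / Real.sqrt t ≤ c := by
          rw [hc, div_le_iff₀ hst]
          nlinarith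
        calc (alp * z / Real.sqrt t) * u = (alp * u / Real.sqrt t) * z := by ring
          _ ≤ (alp * u / Real.sqrt t) * |z| := by
              exact mul_le_mul_of_nonneg_left (le_abs_self z) ha
          _ ≤ c * |z| := by
              exact mul_le_mul_of_nonneg_right hb (abs_nonneg z)
      have h3 : 0 ≤ alp ^ 2 * u ^ 2 / (2 * t) := by positivity
      nlinarith
    have hexp2 : Real.exp (c * |z|) ≤ Real.exp (c * z) + Real.exp (-c * z) := by
      rcases abs_cases z with ⟨habs, _⟩ | ⟨habs, _⟩
      · rw [habs]
        exact le_add_of_nonneg_right (Real.exp_pos _).le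
      · rw [habs, mul_neg, ← neg_mul]
        exact le_add_of_nonneg_left (Real.exp_pos _).le
    have hgnn : 0 ≤ g z u :=
      mul_nonneg (mul_nonneg hlam.le (Real.exp_pos _).le) (hγpos z).le
    rw [mul_one]
    calc ‖Function.uncurry g (z, u)‖ = g z u := by
          simp only [Function.uncurry]
          exact Real.norm_of_nonneg hgnn
      _ ≤ lam * Real.exp (lam * t + c * |z|) * gaussDensity z := by
          apply mul_le_mul_of_nonneg_right _ (hγpos z).le
          exact mul_le_mul_of_nonneg_left (Real.exp_le_exp.2 hexp_le) hlam.le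
      _ ≤ K * h z := by
          rw [hK, hh, Real.exp_add]
          have : Real.exp (c * |z|) * gaussDensity z
              ≤ Real.exp (c * z) * gaussDensity z + Real.exp (-c * z) * gaussDensity z := by
            rw [← add_mul]
            exact mul_le_mul_of_nonneg_right hexp2 (hγpos z).le
          calc lam * (Real.exp (lam * t) * Real.exp (c * |z|)) * gaussDensity z
              = lam * Real.exp (lam * t) * (Real.exp (c * |z|) * gaussDensity z) := by ring
            _ ≤ lam * Real.exp (lam * t)
                * (Real.exp (c * z) * gaussDensity z + Real.exp (-c * z) * gaussDensity z) := by
                exact mul_le_mul_of_nonneg_left this (by positivity)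
  have hint : Integrable (Function.uncurry g) ((volume : Measure ℝ).prod ν) :=
    Integrable.mono' hbound_int hgmeas hbound
  -- rewrite the integrand
  have hsplit : ∀ z : ℝ, jfun lam alp t φ z * gaussDensity z
      = Real.exp ((lam - alp ^ 2 / 2) * t) * φ * (Real.exp (c * z) * gaussDensity z)
        + ∫ u, g z u ∂ν := by
    intro z
    unfold jfun
    rw [add_mul]
    congr 1
    · rw [show alp * z * Real.sqrt t + (lam - alp ^ 2 / 2) * t
        = (lam - alp ^ 2 / 2) * t + c * z by rw [hc]; ring, Real.exp_add]
      ring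
    · rw [intervalIntegral.integral_of_le ht.le, ← hν, ← integral_mul_const]
  simp only [hsplit]
  have h2int : Integrable (fun z => ∫ u, g z u ∂ν) := by
    simpa [Function.uncurry] using hint.integral_prod_left
  rw [integral_add (((integrable_exp_mul_gauss c).const_mul _)) h2int,
    integral_const_mul, integral_exp_mul_gauss, integral_integral_swap hint]
  -- compute the first term
  have hfirst : Real.exp ((lam - alp ^ 2 / 2) * t) * φ * Real.exp (c ^ 2 / 2)
      = Real.exp (lam * t) * φ := by
    rw [mul_right_comm, ← Real.exp_add]
    congr 2
    rw [hc, mul_pow, hts]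
    ring
  rw [hfirst]
  -- compute the inner z-integral for each u
  have hinner : ∀ u ∈ Set.Ioc (0:ℝ) t,
      ∫ z : ℝ, g z u = lam * Real.exp (lam * u) := by
    intro u hu
    have heq : ∀ z : ℝ, g z u
        = lam * Real.exp (lam * u - alp ^ 2 * u ^ 2 / (2 * t))
          * (Real.exp ((alp * u / Real.sqrt t) * z) * gaussDensity z) := by
      intro z
      simp only [hg]
      rw [show (lam + alp * z / Real.sqrt t) * u - alp ^ 2 * u ^ 2 / (2 * t)
          = (lam * u - alp ^ 2 * u ^ 2 / (2 * t)) + (alp * u / Real.sqrt t) * z by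
          field_simp; ring, Real.exp_add]
      ring
    simp only [heq]
    rw [integral_const_mul, integral_exp_mul_gauss, mul_assoc, ← Real.exp_add]
    congr 1
    have : (alp * u / Real.sqrt t) ^ 2 = alp ^ 2 * u ^ 2 / t := by
      rw [div_pow, hts]; ring
    rw [this]
    field_simp
    ring_nf; rw [mul_inv_cancel_right₀ ht.ne']
  rw [setIntegral_congr_fun measurableSet_Ioc hinner]
  have hlast : ∫ u in Set.Ioc (0:ℝ) t, lam * Real.exp (lam * u)
      = Real.exp (lam * t) - 1 := by
    rw [← intervalIntegral.integral_of_le ht.le, intervalIntegral.integral_const_mul,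
      intervalIntegral.integral_comp_mul_left (fun x => Real.exp x) hlam.ne']
    simp only [mul_zero, smul_eq_mul, integral_exp, Real.exp_zero]
    field_simp
  rw [hlast]
  ring
end

section
/- For every t > 0 and every φ ≥ 0, ∫_ℝ j(t, φ, z)² γ(z) dz ≤ φ² e^{(2λ + α²)t} + 2φ e^{λt} · (λ/(λ + α²)) · (e^{(λ + α²)t} − 1) + e^{α² t}(e^{λt} − 1)². -/
open MeasureTheory Real

/- ### Auxiliary definitions and lemmas -/

lemma gaussDensity_nonneg (z : ℝ) : 0 ≤ gaussDensity z :=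
  div_nonneg (Real.exp_pos _).le (Real.sqrt_nonneg _)

lemma gaussDensity_continuous : Continuous gaussDensity := by
  unfold gaussDensity; fun_prop

lemma gauss_shift (C c K : ℝ) :
    (fun z : ℝ => C * Real.exp (c * z + K) * gaussDensity z) =
      fun z : ℝ => C * Real.exp (c ^ 2 / 2 + K) / Real.sqrt (2 * Real.pi) *
        Real.exp (-(1/2 : ℝ) * (z - c) ^ 2) := by
  funext z
  unfold gaussDensity
  have hne : Real.sqrt (2 * Real.pi) ≠ 0 := by positivity
  field_simp
  rw [mul_assoc, ← Real.exp_add, mul_assoc, ← Real.exp_add]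
  congr 2
  ring

lemma gauss_lin_integrable (C c K : ℝ) :
    Integrable (fun z : ℝ => C * Real.exp (c * z + K) * gaussDensity z) := by
  rw [gauss_shift]
  exact ((integrable_exp_neg_mul_sq (by norm_num : (0:ℝ) < 1/2)).comp_sub_right c).const_mul _

lemma gauss_lin_integral (C c K : ℝ) :
    ∫ z : ℝ, C * Real.exp (c * z + K) * gaussDensity z = C * Real.exp (c ^ 2 / 2 + K) := by
  rw [gauss_shift, MeasureTheory.integral_const_mul]
  have h := integral_sub_right_eq_self (μ := volume)
    (fun w : ℝ => Real.exp (-(1/2 : ℝ) * w ^ 2)) c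
  rw [h, integral_gaussian]
  have h2 : Real.pi / (1/2 : ℝ) = 2 * Real.pi := by ring
  rw [h2]
  have h3 : Real.sqrt (2 * Real.pi) ≠ 0 := by positivity
  field_simp

lemma gauss_lin_lintegral (C c K : ℝ) (hC : 0 ≤ C) :
    ∫⁻ z : ℝ, ENNReal.ofReal (C * Real.exp (c * z + K) * gaussDensity z) =
      ENNReal.ofReal (C * Real.exp (c ^ 2 / 2 + K)) := by
  rw [← ofReal_integral_eq_lintegral_ofReal (gauss_lin_integrable C c K)
      (ae_of_all _ fun z => mul_nonneg (mul_nonneg hC (Real.exp_pos _).le)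
        (gaussDensity_nonneg z)), gauss_lin_integral]

lemma setIntegral_exp_mul {c : ℝ} (hc : 0 < c) {T : ℝ} (hT : 0 ≤ T) :
    ∫ u in Set.Ioc (0:ℝ) T, Real.exp (c * u) = (Real.exp (c * T) - 1) / c := by
  rw [← intervalIntegral.integral_of_le hT]
  have h : ∀ u ∈ Set.uIcc (0:ℝ) T, HasDerivAt (fun x => Real.exp (c * x) / c)
      (Real.exp (c * u)) u := by
    intro u _
    have h1 : HasDerivAt (fun x : ℝ => c * x) c u := by
      simpa using (hasDerivAt_id u).const_mul c
    have h2 := h1.exp.div_const c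
    simpa [mul_div_cancel_right₀ _ hc.ne'] using h2
  rw [intervalIntegral.integral_eq_sub_of_hasDerivAt h
    ((Real.continuous_exp.comp (continuous_const.mul continuous_id)).intervalIntegrable 0 T)]
  simp [sub_div]

noncomputable def afun (lam alp s z : ℝ) : ℝ :=
  Real.exp (alp * z * s + (lam - alp ^ 2 / 2) * s ^ 2)

noncomputable def ffun (lam alp s u z : ℝ) : ℝ :=
  lam * Real.exp ((lam + alp * z / s) * u - alp ^ 2 * u ^ 2 / (2 * s ^ 2))

noncomputable def Bfun (lam alp s z : ℝ) : ℝ :=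
  ∫ u in (0:ℝ)..s ^ 2, ffun lam alp s u z

lemma jfun_eq (lam alp s φ z : ℝ) (hs : 0 ≤ s) :
    jfun lam alp (s ^ 2) φ z = afun lam alp s z * φ + Bfun lam alp s z := by
  unfold jfun afun Bfun ffun
  rw [Real.sqrt_sq hs]

lemma afun_continuous (lam alp s : ℝ) : Continuous (fun z => afun lam alp s z) := by
  unfold afun; fun_prop

lemma afun_nonneg (lam alp s z : ℝ) : 0 ≤ afun lam alp s z := (Real.exp_pos _).le

lemma ffun_continuous (lam alp s : ℝ) :
    Continuous (fun p : ℝ × ℝ => ffun lam alp s p.1 p.2) := by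
  unfold ffun; fun_prop

lemma ffun_cont_u (lam alp s z : ℝ) : Continuous (fun u => ffun lam alp s u z) := by
  unfold ffun; fun_prop

lemma ffun_cont_z (lam alp s u : ℝ) : Continuous (fun z => ffun lam alp s u z) := by
  unfold ffun; fun_prop

lemma ffun_nonneg (lam alp s u z : ℝ) (hlam : 0 ≤ lam) : 0 ≤ ffun lam alp s u z :=
  mul_nonneg hlam (Real.exp_pos _).le

lemma ffun_integrableOn (lam alp s z T : ℝ) :
    IntegrableOn (fun u => ffun lam alp s u z) (Set.Ioc 0 T) :=
  (ffun_cont_u lam alp s z).integrableOn_Ioc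

lemma Bfun_nonneg (lam alp s z : ℝ) (hlam : 0 ≤ lam) : 0 ≤ Bfun lam alp s z :=
  intervalIntegral.integral_nonneg (sq_nonneg s) (fun u _ => ffun_nonneg _ _ _ _ _ hlam)

lemma Bfun_eq (lam alp s z : ℝ) :
    Bfun lam alp s z = ∫ u in Set.Ioc (0:ℝ) (s ^ 2), ffun lam alp s u z :=
  intervalIntegral.integral_of_le (sq_nonneg s)

lemma Bfun_measurable (lam alp s : ℝ) : Measurable (fun z => Bfun lam alp s z) := by
  have h : (fun z => Bfun lam alp s z) =
      fun z => ∫ u, ffun lam alp s u z ∂(volume.restrict (Set.Ioc (0:ℝ) (s ^ 2))) := by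
    funext z; exact Bfun_eq lam alp s z
  rw [h]
  exact (StronglyMeasurable.integral_prod_left (f := fun u z => ffun lam alp s u z)
    (ffun_continuous lam alp s).stronglyMeasurable).measurable

lemma ofReal_Bfun (lam alp s z : ℝ) (hlam : 0 ≤ lam) :
    ENNReal.ofReal (Bfun lam alp s z) =
      ∫⁻ u in Set.Ioc (0:ℝ) (s ^ 2), ENNReal.ofReal (ffun lam alp s u z) := by
  rw [Bfun_eq, ofReal_integral_eq_lintegral_ofReal (ffun_integrableOn lam alp s z _)
    (ae_of_all _ fun u => ffun_nonneg _ _ _ _ _ hlam)]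

/- ### Inner Gaussian integrals -/

lemma inner1 (lam alp s φ : ℝ) (hφ : 0 ≤ φ) :
    ∫⁻ z : ℝ, ENNReal.ofReal (φ ^ 2 * afun lam alp s z ^ 2 * gaussDensity z) =
      ENNReal.ofReal (φ ^ 2 * Real.exp ((2 * lam + alp ^ 2) * s ^ 2)) := by
  have h : ∀ z : ℝ, φ ^ 2 * afun lam alp s z ^ 2 * gaussDensity z =
      φ ^ 2 * Real.exp ((2 * alp * s) * z + (2 * lam - alp ^ 2) * s ^ 2) * gaussDensity z := by
    intro z
    unfold afun
    rw [sq (Real.exp _), ← Real.exp_add]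
    congr 2
    ring
  simp only [h]
  rw [gauss_lin_lintegral _ _ _ (sq_nonneg φ)]
  congr 2
  ring

lemma inner2 (lam alp s φ : ℝ) (hs : 0 < s) (hlam : 0 ≤ lam) (hφ : 0 ≤ φ) (u : ℝ) :
    ∫⁻ z : ℝ, ENNReal.ofReal (2 * φ * afun lam alp s z * gaussDensity z) *
        ENNReal.ofReal (ffun lam alp s u z) =
      ENNReal.ofReal (2 * φ * lam * Real.exp (lam * s ^ 2 + (lam + alp ^ 2) * u)) := by
  have h : ∀ z : ℝ,
      ENNReal.ofReal (2 * φ * afun lam alp s z * gaussDensity z) *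
        ENNReal.ofReal (ffun lam alp s u z) =
      ENNReal.ofReal ((2 * φ * lam) *
        Real.exp ((alp * s + alp * u / s) * z +
          ((lam - alp ^ 2 / 2) * s ^ 2 + (lam * u - alp ^ 2 * u ^ 2 / (2 * s ^ 2)))) *
        gaussDensity z) := by
    intro z
    rw [← ENNReal.ofReal_mul (mul_nonneg (mul_nonneg (by positivity) (afun_nonneg lam alp s z))
      (gaussDensity_nonneg z))]
    congr 1
    have hZ : Real.exp (alp * z * s + (lam - alp ^ 2 / 2) * s ^ 2) *
        Real.exp ((lam + alp * z / s) * u - alp ^ 2 * u ^ 2 / (2 * s ^ 2)) =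
        Real.exp ((alp * s + alp * u / s) * z +
          ((lam - alp ^ 2 / 2) * s ^ 2 + (lam * u - alp ^ 2 * u ^ 2 / (2 * s ^ 2)))) := by
      rw [← Real.exp_add]
      congr 1
      field_simp
      ring
    calc 2 * φ * afun lam alp s z * gaussDensity z * ffun lam alp s u z
        = 2 * φ * lam * (Real.exp (alp * z * s + (lam - alp ^ 2 / 2) * s ^ 2) *
            Real.exp ((lam + alp * z / s) * u - alp ^ 2 * u ^ 2 / (2 * s ^ 2))) *
            gaussDensity z := by
          unfold afun ffun; ring
      _ = 2 * φ * lam *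
            Real.exp ((alp * s + alp * u / s) * z +
              ((lam - alp ^ 2 / 2) * s ^ 2 + (lam * u - alp ^ 2 * u ^ 2 / (2 * s ^ 2)))) *
            gaussDensity z := by rw [hZ]
  simp only [h]
  rw [gauss_lin_lintegral _ _ _ (by positivity)]
  congr 2
  have hs0 : s ≠ 0 := hs.ne'
  congr 1
  field_simp
  ring

lemma inner3 (lam alp s : ℝ) (hs : 0 < s) (hlam : 0 ≤ lam) (u v : ℝ) :
    ∫⁻ z : ℝ, ENNReal.ofReal (gaussDensity z) *
        (ENNReal.ofReal (ffun lam alp s u z) * ENNReal.ofReal (ffun lam alp s v z)) =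
      ENNReal.ofReal (lam ^ 2 * Real.exp (lam * (u + v) + alp ^ 2 * (u * v) / s ^ 2)) := by
  have h : ∀ z : ℝ,
      ENNReal.ofReal (gaussDensity z) *
        (ENNReal.ofReal (ffun lam alp s u z) * ENNReal.ofReal (ffun lam alp s v z)) =
      ENNReal.ofReal ((lam ^ 2) *
        Real.exp ((alp * (u + v) / s) * z +
          (lam * (u + v) - (alp ^ 2 * u ^ 2 + alp ^ 2 * v ^ 2) / (2 * s ^ 2))) *
        gaussDensity z) := by
    intro z
    rw [← ENNReal.ofReal_mul (ffun_nonneg lam alp s u z hlam),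
      ← ENNReal.ofReal_mul (gaussDensity_nonneg z)]
    congr 1
    have hZ : Real.exp ((lam + alp * z / s) * u - alp ^ 2 * u ^ 2 / (2 * s ^ 2)) *
        Real.exp ((lam + alp * z / s) * v - alp ^ 2 * v ^ 2 / (2 * s ^ 2)) =
        Real.exp ((alp * (u + v) / s) * z +
          (lam * (u + v) - (alp ^ 2 * u ^ 2 + alp ^ 2 * v ^ 2) / (2 * s ^ 2))) := by
      rw [← Real.exp_add]
      congr 1
      field_simp
      ring
    calc gaussDensity z * (ffun lam alp s u z * ffun lam alp s v z)
        = lam ^ 2 * (Real.exp ((lam + alp * z / s) * u - alp ^ 2 * u ^ 2 / (2 * s ^ 2)) *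
            Real.exp ((lam + alp * z / s) * v - alp ^ 2 * v ^ 2 / (2 * s ^ 2))) *
            gaussDensity z := by
          unfold ffun; ring
      _ = lam ^ 2 *
            Real.exp ((alp * (u + v) / s) * z +
              (lam * (u + v) - (alp ^ 2 * u ^ 2 + alp ^ 2 * v ^ 2) / (2 * s ^ 2))) *
            gaussDensity z := by rw [hZ]
  simp only [h]
  rw [gauss_lin_lintegral _ _ _ (sq_nonneg lam)]
  congr 2
  field_simp
  ring

lemma outer2 (lam alp s φ : ℝ) (hs : 0 < s) (hlam : 0 < lam) (halp : 0 < alp) (hφ : 0 ≤ φ) :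
    ∫⁻ u in Set.Ioc (0:ℝ) (s ^ 2),
        ENNReal.ofReal (2 * φ * lam * Real.exp (lam * s ^ 2 + (lam + alp ^ 2) * u)) =
      ENNReal.ofReal (2 * φ * Real.exp (lam * s ^ 2) * (lam / (lam + alp ^ 2)) *
        (Real.exp ((lam + alp ^ 2) * s ^ 2) - 1)) := by
  have hσ : 0 < lam + alp ^ 2 := by positivity
  have h : ∀ u : ℝ, 2 * φ * lam * Real.exp (lam * s ^ 2 + (lam + alp ^ 2) * u) =
      (2 * φ * lam * Real.exp (lam * s ^ 2)) * Real.exp ((lam + alp ^ 2) * u) := by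
    intro u; rw [Real.exp_add]; ring
  simp only [h]
  rw [← ofReal_integral_eq_lintegral_ofReal]
  · rw [MeasureTheory.integral_const_mul, setIntegral_exp_mul hσ (sq_nonneg s)]
    have hval : 2 * φ * lam * Real.exp (lam * s ^ 2) *
        ((Real.exp ((lam + alp ^ 2) * s ^ 2) - 1) / (lam + alp ^ 2)) =
        2 * φ * Real.exp (lam * s ^ 2) * (lam / (lam + alp ^ 2)) *
          (Real.exp ((lam + alp ^ 2) * s ^ 2) - 1) := by
      simp only [div_eq_inv_mul]
      ring
    rw [hval]
  · exact Continuous.integrableOn_Ioc (by fun_prop)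
  · exact ae_of_all _ fun u => by positivity

lemma outer3 (lam alp s : ℝ) (hs : 0 < s) (hlam : 0 < lam) (halp : 0 < alp) :
    ∫⁻ u in Set.Ioc (0:ℝ) (s ^ 2), ∫⁻ v in Set.Ioc (0:ℝ) (s ^ 2),
        ENNReal.ofReal (lam ^ 2 * Real.exp (lam * (u + v) + alp ^ 2 * (u * v) / s ^ 2))
      ≤ ENNReal.ofReal (Real.exp (alp ^ 2 * s ^ 2) * (Real.exp (lam * s ^ 2) - 1) ^ 2) := by
  set g : ℝ → ℝ := fun x => lam * Real.exp (lam * x + alp ^ 2 * s ^ 2 / 2) with hg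
  have hgnn : ∀ x, 0 ≤ g x := fun x => by rw [hg]; positivity
  have hE : (0:ℝ) ≤ Real.exp (alp ^ 2 * s ^ 2 / 2) * (Real.exp (lam * s ^ 2) - 1) := by
    have := Real.one_le_exp (by positivity : (0:ℝ) ≤ lam * s ^ 2)
    have h2 := (Real.exp_pos (alp ^ 2 * s ^ 2 / 2)).le
    nlinarith
  have step1 : ∫⁻ u in Set.Ioc (0:ℝ) (s ^ 2), ∫⁻ v in Set.Ioc (0:ℝ) (s ^ 2),
        ENNReal.ofReal (lam ^ 2 * Real.exp (lam * (u + v) + alp ^ 2 * (u * v) / s ^ 2))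
      ≤ ∫⁻ u in Set.Ioc (0:ℝ) (s ^ 2), ∫⁻ v in Set.Ioc (0:ℝ) (s ^ 2),
        ENNReal.ofReal (g u) * ENNReal.ofReal (g v) := by
    apply lintegral_mono_ae
    filter_upwards [ae_restrict_mem measurableSet_Ioc] with u hu
    apply lintegral_mono_ae
    filter_upwards [ae_restrict_mem measurableSet_Ioc] with v hv
    rw [← ENNReal.ofReal_mul (hgnn u)]
    apply ENNReal.ofReal_le_ofReal
    have hgg : g u * g v = lam ^ 2 *
        Real.exp ((lam * u + alp ^ 2 * s ^ 2 / 2) + (lam * v + alp ^ 2 * s ^ 2 / 2)) := by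
      rw [hg, Real.exp_add]; ring
    rw [hgg]
    apply mul_le_mul_of_nonneg_left _ (sq_nonneg lam)
    apply Real.exp_le_exp.mpr
    have h1 : u * v ≤ s ^ 2 * s ^ 2 :=
      mul_le_mul hu.2 hv.2 hv.1.le (by positivity)
    have h2 : alp ^ 2 * (u * v) / s ^ 2 ≤ alp ^ 2 * s ^ 2 := by
      rw [div_le_iff₀ (by positivity : (0:ℝ) < s ^ 2)]
      nlinarith [sq_nonneg alp]
    linarith
  have Jval : ∫⁻ x in Set.Ioc (0:ℝ) (s ^ 2), ENNReal.ofReal (g x) =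
      ENNReal.ofReal (Real.exp (alp ^ 2 * s ^ 2 / 2) * (Real.exp (lam * s ^ 2) - 1)) := by
    have h : ∀ x : ℝ, g x = (lam * Real.exp (alp ^ 2 * s ^ 2 / 2)) * Real.exp (lam * x) := by
      intro x; simp only [hg]; rw [Real.exp_add]; ring
    simp only [h]
    rw [← ofReal_integral_eq_lintegral_ofReal]
    · rw [MeasureTheory.integral_const_mul, setIntegral_exp_mul hlam (sq_nonneg s)]
      congr 1
      field_simp
    · exact Continuous.integrableOn_Ioc (by fun_prop)
    · exact ae_of_all _ fun u => by positivity
  have step2 : ∫⁻ u in Set.Ioc (0:ℝ) (s ^ 2), ∫⁻ v in Set.Ioc (0:ℝ) (s ^ 2),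
        ENNReal.ofReal (g u) * ENNReal.ofReal (g v) =
      ENNReal.ofReal (Real.exp (alp ^ 2 * s ^ 2) * (Real.exp (lam * s ^ 2) - 1) ^ 2) := by
    have hinner : ∀ u : ℝ, ∫⁻ v in Set.Ioc (0:ℝ) (s ^ 2),
        ENNReal.ofReal (g u) * ENNReal.ofReal (g v) =
        ENNReal.ofReal (g u) * ∫⁻ v in Set.Ioc (0:ℝ) (s ^ 2), ENNReal.ofReal (g v) :=
      fun u => lintegral_const_mul' _ _ ENNReal.ofReal_ne_top
    simp only [hinner, Jval]
    rw [lintegral_mul_const' _ _ ENNReal.ofReal_ne_top, Jval, ← ENNReal.ofReal_mul hE]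
    congr 1
    have hxx : Real.exp (alp ^ 2 * s ^ 2) =
        Real.exp (alp ^ 2 * s ^ 2 / 2) * Real.exp (alp ^ 2 * s ^ 2 / 2) := by
      rw [← Real.exp_add]; ring_nf
    rw [hxx]; ring
  exact step1.trans (le_of_eq step2)

/-- Second-moment bound for the one-step odds update under the Gaussian density. -/
theorem gaussian_second_moment_jfun_le (lam alp : ℝ) (hlam : 0 < lam) (halp : 0 < alp)
    (t : ℝ) (ht : 0 < t) (φ : ℝ) (hφ : 0 ≤ φ) :
    ∫ z : ℝ, (jfun lam alp t φ z) ^ 2 * gaussDensity z ≤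
      φ ^ 2 * Real.exp ((2 * lam + alp ^ 2) * t) +
        2 * φ * Real.exp (lam * t) * (lam / (lam + alp ^ 2)) *
          (Real.exp ((lam + alp ^ 2) * t) - 1) +
        Real.exp (alp ^ 2 * t) * (Real.exp (lam * t) - 1) ^ 2 := by
  obtain ⟨s, hs, rfl⟩ : ∃ s : ℝ, 0 < s ∧ t = s ^ 2 :=
    ⟨Real.sqrt t, Real.sqrt_pos.mpr ht, (Real.sq_sqrt ht.le).symm⟩
  have hγc := gaussDensity_continuous
  have hac := afun_continuous lam alp s
  have hBm := Bfun_measurable lam alp s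
  have hfc := ffun_continuous lam alp s
  have hγ := gaussDensity_nonneg
  have han : ∀ z, 0 ≤ afun lam alp s z := afun_nonneg lam alp s
  have hBn : ∀ z, 0 ≤ Bfun lam alp s z := fun z => Bfun_nonneg lam alp s z hlam.le
  have hT1 : 0 ≤ φ ^ 2 * Real.exp ((2 * lam + alp ^ 2) * s ^ 2) := by positivity
  have hT2 : 0 ≤ 2 * φ * Real.exp (lam * s ^ 2) * (lam / (lam + alp ^ 2)) *
      (Real.exp ((lam + alp ^ 2) * s ^ 2) - 1) := by
    have h1 : (1:ℝ) ≤ Real.exp ((lam + alp ^ 2) * s ^ 2) :=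
      Real.one_le_exp (by positivity)
    have h2 : (0:ℝ) ≤ Real.exp ((lam + alp ^ 2) * s ^ 2) - 1 := by linarith
    have h3 : (0:ℝ) ≤ lam / (lam + alp ^ 2) := by positivity
    positivity
  have hT3 : 0 ≤ Real.exp (alp ^ 2 * s ^ 2) * (Real.exp (lam * s ^ 2) - 1) ^ 2 := by positivity
  have hj : ∀ z : ℝ, jfun lam alp (s ^ 2) φ z = afun lam alp s z * φ + Bfun lam alp s z :=
    fun z => jfun_eq lam alp s φ z hs.le
  simp only [hj]
  rw [integral_eq_lintegral_of_nonneg_ae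
    (f := fun z => (afun lam alp s z * φ + Bfun lam alp s z) ^ 2 * gaussDensity z)
    (ae_of_all _ fun z => mul_nonneg (sq_nonneg _) (hγ z))
    ((((hac.measurable.mul_const φ).add hBm).pow_const 2).mul
      hγc.measurable).aestronglyMeasurable]
  apply ENNReal.toReal_le_of_le_ofReal (by linarith)
  have hsplit : ∀ z : ℝ,
      ENNReal.ofReal ((afun lam alp s z * φ + Bfun lam alp s z) ^ 2 * gaussDensity z) =
      ENNReal.ofReal (φ ^ 2 * afun lam alp s z ^ 2 * gaussDensity z) +
        ENNReal.ofReal (2 * φ * afun lam alp s z * gaussDensity z) *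
          ENNReal.ofReal (Bfun lam alp s z) +
        ENNReal.ofReal (gaussDensity z) *
          (ENNReal.ofReal (Bfun lam alp s z) * ENNReal.ofReal (Bfun lam alp s z)) := by
    intro z
    have h2aγ : 0 ≤ 2 * φ * afun lam alp s z * gaussDensity z :=
      mul_nonneg (mul_nonneg (by positivity) (han z)) (hγ z)
    have hA : 0 ≤ φ ^ 2 * afun lam alp s z ^ 2 * gaussDensity z :=
      mul_nonneg (mul_nonneg (sq_nonneg φ) (sq_nonneg _)) (hγ z)
    have hAB : 0 ≤ 2 * φ * afun lam alp s z * gaussDensity z * Bfun lam alp s z :=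
      mul_nonneg h2aγ (hBn z)
    have hC : 0 ≤ gaussDensity z * (Bfun lam alp s z * Bfun lam alp s z) :=
      mul_nonneg (hγ z) (mul_nonneg (hBn z) (hBn z))
    rw [← ENNReal.ofReal_mul (hBn z), ← ENNReal.ofReal_mul (hγ z),
      ← ENNReal.ofReal_mul h2aγ,
      ← ENNReal.ofReal_add hA hAB, ← ENNReal.ofReal_add (add_nonneg hA hAB) hC]
    congr 1
    ring
  simp only [hsplit]
  have mF : Measurable (fun p : ℝ × ℝ => ENNReal.ofReal (ffun lam alp s p.1 p.2)) :=
    hfc.measurable.ennreal_ofReal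
  have m2 : Measurable (fun z => ENNReal.ofReal (2 * φ * afun lam alp s z * gaussDensity z) *
      ENNReal.ofReal (Bfun lam alp s z)) :=
    (((continuous_const.mul hac).mul hγc).measurable.ennreal_ofReal).mul hBm.ennreal_ofReal
  have m3 : Measurable (fun z => ENNReal.ofReal (gaussDensity z) *
      (ENNReal.ofReal (Bfun lam alp s z) * ENNReal.ofReal (Bfun lam alp s z))) :=
    (hγc.measurable.ennreal_ofReal).mul (hBm.ennreal_ofReal.mul hBm.ennreal_ofReal)
  rw [lintegral_add_right _ m3, lintegral_add_right _ m2]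
  rw [ENNReal.ofReal_add (add_nonneg hT1 hT2) hT3, ENNReal.ofReal_add hT1 hT2]
  have hBof : ∀ z, ENNReal.ofReal (Bfun lam alp s z) =
      ∫⁻ u in Set.Ioc (0:ℝ) (s ^ 2), ENNReal.ofReal (ffun lam alp s u z) :=
    fun z => ofReal_Bfun lam alp s z hlam.le
  have hfin : ∀ z, (∫⁻ u in Set.Ioc (0:ℝ) (s ^ 2),
      ENNReal.ofReal (ffun lam alp s u z)) ≠ ⊤ :=
    fun z => by rw [← hBof z]; exact ENNReal.ofReal_ne_top
  -- second term
  have hI2 : ∫⁻ z : ℝ, ENNReal.ofReal (2 * φ * afun lam alp s z * gaussDensity z) *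
      ENNReal.ofReal (Bfun lam alp s z) =
      ENNReal.ofReal (2 * φ * Real.exp (lam * s ^ 2) * (lam / (lam + alp ^ 2)) *
        (Real.exp ((lam + alp ^ 2) * s ^ 2) - 1)) := by
    have hpull : ∀ z : ℝ,
        ENNReal.ofReal (2 * φ * afun lam alp s z * gaussDensity z) *
          ENNReal.ofReal (Bfun lam alp s z) =
        ∫⁻ u in Set.Ioc (0:ℝ) (s ^ 2),
          ENNReal.ofReal (2 * φ * afun lam alp s z * gaussDensity z) *
            ENNReal.ofReal (ffun lam alp s u z) := by
      intro z
      rw [hBof z, ← lintegral_const_mul' _ _ ENNReal.ofReal_ne_top]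
    simp only [hpull]
    have hm : AEMeasurable (Function.uncurry fun z u =>
        ENNReal.ofReal (2 * φ * afun lam alp s z * gaussDensity z) *
          ENNReal.ofReal (ffun lam alp s u z))
        (volume.prod (volume.restrict (Set.Ioc (0:ℝ) (s ^ 2)))) := by
      apply Measurable.aemeasurable
      unfold Function.uncurry afun ffun gaussDensity
      fun_prop
    rw [lintegral_lintegral_swap hm]
    rw [lintegral_congr fun u => inner2 lam alp s φ hs hlam.le hφ u]
    exact outer2 lam alp s φ hs hlam halp hφ
  -- third term
  have hI3 : ∫⁻ z : ℝ, ENNReal.ofReal (gaussDensity z) *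
      (ENNReal.ofReal (Bfun lam alp s z) * ENNReal.ofReal (Bfun lam alp s z)) ≤
      ENNReal.ofReal (Real.exp (alp ^ 2 * s ^ 2) * (Real.exp (lam * s ^ 2) - 1) ^ 2) := by
    have e2 : ∀ z : ℝ, ENNReal.ofReal (gaussDensity z) *
        (ENNReal.ofReal (Bfun lam alp s z) * ENNReal.ofReal (Bfun lam alp s z)) =
        ∫⁻ u in Set.Ioc (0:ℝ) (s ^ 2), ∫⁻ v in Set.Ioc (0:ℝ) (s ^ 2),
          ENNReal.ofReal (gaussDensity z) *
            (ENNReal.ofReal (ffun lam alp s u z) * ENNReal.ofReal (ffun lam alp s v z)) := by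
      intro z
      rw [hBof z]
      rw [← lintegral_mul_const' _ _ (hfin z), ← lintegral_const_mul' _ _ ENNReal.ofReal_ne_top]
      refine lintegral_congr fun u => ?_
      rw [← lintegral_const_mul' _ _ (ENNReal.ofReal_ne_top),
        ← lintegral_const_mul' _ _ (ENNReal.ofReal_ne_top)]
    simp only [e2]
    have mG : AEMeasurable (Function.uncurry fun z u =>
        ∫⁻ v in Set.Ioc (0:ℝ) (s ^ 2), ENNReal.ofReal (gaussDensity z) *
          (ENNReal.ofReal (ffun lam alp s u z) * ENNReal.ofReal (ffun lam alp s v z)))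
        (volume.prod (volume.restrict (Set.Ioc (0:ℝ) (s ^ 2)))) := by
      apply Measurable.aemeasurable
      apply Measurable.lintegral_prod_right'
        (f := fun (q : (ℝ × ℝ) × ℝ) => ENNReal.ofReal (gaussDensity q.1.1) *
          (ENNReal.ofReal (ffun lam alp s q.1.2 q.1.1) *
            ENNReal.ofReal (ffun lam alp s q.2 q.1.1)))
      unfold ffun gaussDensity
      fun_prop
    rw [lintegral_lintegral_swap mG]
    refine le_trans (le_of_eq ?_) (outer3 lam alp s hs hlam halp)
    refine lintegral_congr fun u => ?_
    have m2' : AEMeasurable (Function.uncurry fun z v =>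
        ENNReal.ofReal (gaussDensity z) *
          (ENNReal.ofReal (ffun lam alp s u z) * ENNReal.ofReal (ffun lam alp s v z)))
        (volume.prod (volume.restrict (Set.Ioc (0:ℝ) (s ^ 2)))) := by
      apply Measurable.aemeasurable
      unfold Function.uncurry ffun gaussDensity
      fun_prop
    rw [lintegral_lintegral_swap m2']
    exact lintegral_congr fun v => inner3 lam alp s hs hlam.le u v
  rw [inner1 lam alp s φ hφ, hI2]
  exact add_le_add le_rfl hI3
end

section
/- There exists a constant C > 0 (depending only on λ and α) such that for every t ∈ (0, 1] and every φ ≥ 0, ∫_ℝ ( j(t, φ, z) − φ )² γ(z) dz ≤ C t (φ + 1)². -/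
open MeasureTheory Real

lemma aux_abs_exp_sub_one (x : ℝ) : |Real.exp x - 1| ≤ |x| * Real.exp |x| := by
  rcases le_or_gt 0 x with hx | hx
  · rw [abs_of_nonneg hx, abs_of_nonneg (by nlinarith [Real.add_one_le_exp x] : (0:ℝ) ≤ Real.exp x - 1)]
    have h := mul_le_mul_of_nonneg_right (Real.add_one_le_exp (-x)) (Real.exp_pos x).le
    rw [← Real.exp_add] at h
    simp at h
    nlinarith
  · rw [abs_of_neg hx, abs_of_nonpos (by nlinarith [Real.exp_lt_one_iff.mpr hx] : Real.exp x - 1 ≤ 0)]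
    nlinarith [Real.add_one_le_exp x, Real.one_le_exp (by linarith : (0:ℝ) ≤ -x)]

lemma aux_sq_le_exp (y : ℝ) (hy : 0 ≤ y) : y ^ 2 ≤ Real.exp (2 * y) := by
  have h1 : y ≤ Real.exp y := by nlinarith [Real.add_one_le_exp y]
  have h2 : Real.exp (2 * y) = Real.exp y * Real.exp y := by rw [two_mul, Real.exp_add]
  nlinarith [Real.exp_pos y]

set_option maxHeartbeats 4000000 in
/-- Small-time mean-square displacement bound for the one-step odds update:
`∫ (j(t,φ,z) − φ)² γ(z) dz ≤ C t (φ + 1)²` for `t ∈ (0,1]`, with `C` depending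
only on `λ` and `α`. -/
theorem gaussian_mean_square_displacement_jfun (lam alp : ℝ) (hlam : 0 < lam) (halp : 0 < alp) :
    ∃ C : ℝ, 0 < C ∧ ∀ t : ℝ, t ∈ Set.Ioc (0:ℝ) 1 → ∀ φ : ℝ, 0 ≤ φ →
      ∫ z : ℝ, (jfun lam alp t φ z - φ) ^ 2 * gaussDensity z ≤ C * t * (φ + 1) ^ 2 := by
  have hπ : 0 < Real.sqrt (2 * Real.pi) := Real.sqrt_pos.mpr (by positivity)
  set K : ℝ := (2 * Real.exp (4 * |lam - alp ^ 2 / 2|) + 2 * lam ^ 2 * Real.exp (2 * lam)) *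
      Real.exp (16 * alp ^ 2) / Real.sqrt (2 * Real.pi) with hKdef
  have hK : 0 < K := by positivity
  refine ⟨K * Real.sqrt (4 * Real.pi) + 1, by positivity, ?_⟩
  intro t ht φ hφ
  obtain ⟨ht0, ht1⟩ := ht
  have hst : 0 < Real.sqrt t := Real.sqrt_pos.mpr ht0
  have hst1 : Real.sqrt t ≤ 1 := by
    rw [show (1:ℝ) = Real.sqrt 1 by simp]
    exact Real.sqrt_le_sqrt ht1
  have hsqt : Real.sqrt t * Real.sqrt t = t := Real.mul_self_sqrt ht0.le
  have htst : t ≤ Real.sqrt t := by nlinarith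
  -- pointwise bound
  have key : ∀ z : ℝ, (jfun lam alp t φ z - φ) ^ 2 * gaussDensity z ≤
      t * (φ + 1) ^ 2 * (K * Real.exp (-(1/4) * z ^ 2)) := by
    intro z
    have hj : jfun lam alp t φ z - φ =
        φ * (Real.exp (alp * z * Real.sqrt t + (lam - alp ^ 2 / 2) * t) - 1) +
        (∫ u in (0:ℝ)..t,
          lam * Real.exp ((lam + alp * z / Real.sqrt t) * u - alp ^ 2 * u ^ 2 / (2 * t))) := by
      simp only [jfun]; ring
    set x : ℝ := alp * z * Real.sqrt t + (lam - alp ^ 2 / 2) * t with hxdef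
    set B : ℝ := ∫ u in (0:ℝ)..t,
        lam * Real.exp ((lam + alp * z / Real.sqrt t) * u - alp ^ 2 * u ^ 2 / (2 * t)) with hBdef
    set y : ℝ := alp * |z| + |lam - alp ^ 2 / 2| with hydef
    have hynn : 0 ≤ y := by positivity
    -- bound on B
    have hBnn : 0 ≤ B := intervalIntegral.integral_nonneg ht0.le fun u _ => by positivity
    have hBle : B ≤ t * (lam * Real.exp (lam + alp * |z|)) := by
      have hci : IntervalIntegrable (fun u : ℝ =>
          lam * Real.exp ((lam + alp * z / Real.sqrt t) * u - alp ^ 2 * u ^ 2 / (2 * t)))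
          volume 0 t := by
        apply Continuous.intervalIntegrable
        exact continuous_const.mul (Real.continuous_exp.comp
          ((continuous_const.mul continuous_id).sub
            ((continuous_const.mul (continuous_pow 2)).div_const _)))
      have hmono : ∀ u ∈ Set.Icc (0:ℝ) t,
          lam * Real.exp ((lam + alp * z / Real.sqrt t) * u - alp ^ 2 * u ^ 2 / (2 * t)) ≤
          lam * Real.exp (lam + alp * |z|) := by
        intro u hu
        obtain ⟨hu0, hut⟩ := hu
        have h2 : alp * z / Real.sqrt t * u ≤ alp * |z| := by
          rw [div_mul_eq_mul_div, div_le_iff₀ hst]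
          calc alp * z * u ≤ alp * |z| * u :=
              mul_le_mul_of_nonneg_right (mul_le_mul_of_nonneg_left (le_abs_self z) halp.le) hu0
            _ ≤ alp * |z| * Real.sqrt t :=
              mul_le_mul_of_nonneg_left (hut.trans htst) (by positivity)
        have h3 : 0 ≤ alp ^ 2 * u ^ 2 / (2 * t) := by positivity
        have h1 : (lam + alp * z / Real.sqrt t) * u - alp ^ 2 * u ^ 2 / (2 * t) ≤
            lam + alp * |z| := by nlinarith [mul_le_mul_of_nonneg_right (hut.trans ht1) hlam.le]
        exact mul_le_mul_of_nonneg_left (Real.exp_le_exp.mpr h1) hlam.le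
      calc B ≤ ∫ _ in (0:ℝ)..t, lam * Real.exp (lam + alp * |z|) :=
            intervalIntegral.integral_mono_on ht0.le hci intervalIntegrable_const hmono
        _ = t * (lam * Real.exp (lam + alp * |z|)) := by
            rw [intervalIntegral.integral_const]; simp
    -- bound on A
    have hxabs : |x| ≤ Real.sqrt t * y := by
      rw [hxdef, hydef]
      calc |alp * z * Real.sqrt t + (lam - alp ^ 2 / 2) * t| ≤
          |alp * z * Real.sqrt t| + |(lam - alp ^ 2 / 2) * t| := abs_add_le _ _
        _ = alp * |z| * Real.sqrt t + |lam - alp ^ 2 / 2| * t := by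
            rw [abs_mul, abs_mul, abs_mul, abs_of_nonneg halp.le, abs_of_nonneg hst.le,
              abs_of_nonneg ht0.le]
        _ ≤ Real.sqrt t * (alp * |z| + |lam - alp ^ 2 / 2|) := by nlinarith [abs_nonneg (lam - alp^2/2)]
    have hxy : |x| ≤ y := hxabs.trans (by nlinarith)
    have hA2 : (Real.exp x - 1) ^ 2 ≤ t * Real.exp (4 * y) := by
      have he1 := aux_abs_exp_sub_one x
      have h1 : (Real.exp x - 1) ^ 2 = |Real.exp x - 1| ^ 2 := (sq_abs _).symm
      have h2 : |Real.exp x - 1| ^ 2 ≤ (|x| * Real.exp |x|) ^ 2 :=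
        pow_le_pow_left₀ (abs_nonneg _) he1 2
      have h3 : (|x| * Real.exp |x|) ^ 2 = |x| ^ 2 * (Real.exp |x|) ^ 2 := by ring
      have h4 : |x| ^ 2 ≤ t * y ^ 2 := by
        have := pow_le_pow_left₀ (abs_nonneg x) hxabs 2
        calc |x| ^ 2 ≤ (Real.sqrt t * y) ^ 2 := this
          _ = t * y ^ 2 := by rw [mul_pow]; nlinarith
      have h5 : (Real.exp |x|) ^ 2 ≤ (Real.exp y) ^ 2 :=
        pow_le_pow_left₀ (Real.exp_pos _).le (Real.exp_le_exp.mpr hxy) 2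
      have h6 : y ^ 2 ≤ Real.exp (2 * y) := aux_sq_le_exp y hynn
      have h7 : Real.exp (2 * y) * (Real.exp y) ^ 2 = Real.exp (4 * y) := by
        rw [sq, ← Real.exp_add, ← Real.exp_add]; ring_nf
      calc (Real.exp x - 1) ^ 2 = |Real.exp x - 1| ^ 2 := h1
        _ ≤ (|x| * Real.exp |x|) ^ 2 := h2
        _ = |x| ^ 2 * (Real.exp |x|) ^ 2 := h3
        _ ≤ (t * y ^ 2) * (Real.exp y) ^ 2 :=
            mul_le_mul h4 h5 (sq_nonneg _) (by positivity)
        _ ≤ (t * Real.exp (2 * y)) * (Real.exp y) ^ 2 :=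
            mul_le_mul_of_nonneg_right (mul_le_mul_of_nonneg_left h6 ht0.le) (sq_nonneg _)
        _ = t * Real.exp (4 * y) := by rw [mul_assoc, h7]
    -- combine
    have hsq : (jfun lam alp t φ z - φ) ^ 2 ≤ 2 * φ ^ 2 * (Real.exp x - 1) ^ 2 + 2 * B ^ 2 := by
      rw [hj]; nlinarith [sq_nonneg (φ * (Real.exp x - 1) - B)]
    have hB2 : B ^ 2 ≤ t * (lam ^ 2 * Real.exp (2 * lam) * Real.exp (4 * (alp * |z|))) := by
      have h1 : B ^ 2 ≤ (t * (lam * Real.exp (lam + alp * |z|))) ^ 2 := by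
        apply pow_le_pow_left₀ hBnn hBle
      have h2 : (Real.exp (lam + alp * |z|)) ^ 2 = Real.exp (2 * lam) * Real.exp (2 * (alp * |z|)) := by
        rw [sq, ← Real.exp_add, ← Real.exp_add]; ring_nf
      have h3 : Real.exp (2 * (alp * |z|)) ≤ Real.exp (4 * (alp * |z|)) := by
        apply Real.exp_le_exp.mpr; nlinarith [abs_nonneg z]
      have ht2 : t ^ 2 ≤ t := by nlinarith
      calc B ^ 2 ≤ (t * (lam * Real.exp (lam + alp * |z|))) ^ 2 := h1
        _ = t ^ 2 * (lam ^ 2 * ((Real.exp (lam + alp * |z|)) ^ 2)) := by ring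
        _ = t ^ 2 * (lam ^ 2 * (Real.exp (2 * lam) * Real.exp (2 * (alp * |z|)))) := by rw [h2]
        _ ≤ t * (lam ^ 2 * (Real.exp (2 * lam) * Real.exp (4 * (alp * |z|)))) := by
            apply mul_le_mul ht2 ?_ (by positivity) ht0.le
            exact mul_le_mul_of_nonneg_left (mul_le_mul_of_nonneg_left h3 (Real.exp_pos _).le)
              (by positivity)
        _ = t * (lam ^ 2 * Real.exp (2 * lam) * Real.exp (4 * (alp * |z|))) := by ring
    have hA2' : (Real.exp x - 1) ^ 2 ≤
        t * (Real.exp (4 * |lam - alp ^ 2 / 2|) * Real.exp (4 * (alp * |z|))) := by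
      have : Real.exp (4 * y) = Real.exp (4 * (alp * |z|)) * Real.exp (4 * |lam - alp ^ 2 / 2|) := by
        rw [← Real.exp_add, hydef]; ring_nf
      rw [← mul_comm (Real.exp (4 * (alp * |z|))) _, ← this]
      exact hA2
    have hφ1 : φ ^ 2 ≤ (φ + 1) ^ 2 := by nlinarith
    have hφ2 : (1:ℝ) ≤ (φ + 1) ^ 2 := by nlinarith
    have h1 : (jfun lam alp t φ z - φ) ^ 2 ≤
        t * ((φ + 1) ^ 2 * ((2 * Real.exp (4 * |lam - alp ^ 2 / 2|) +
          2 * lam ^ 2 * Real.exp (2 * lam)) * Real.exp (4 * (alp * |z|)))) := by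
      have e1 : (0:ℝ) < Real.exp (4 * |lam - alp ^ 2 / 2|) := Real.exp_pos _
      have e2 : (0:ℝ) < Real.exp (2 * lam) := Real.exp_pos _
      have e3 : (0:ℝ) < Real.exp (4 * (alp * |z|)) := Real.exp_pos _
      calc (jfun lam alp t φ z - φ) ^ 2 ≤ 2 * φ ^ 2 * (Real.exp x - 1) ^ 2 + 2 * B ^ 2 := hsq
        _ ≤ 2 * φ ^ 2 * (t * (Real.exp (4 * |lam - alp ^ 2 / 2|) * Real.exp (4 * (alp * |z|)))) +
            2 * (t * (lam ^ 2 * Real.exp (2 * lam) * Real.exp (4 * (alp * |z|)))) := by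
          have := mul_le_mul_of_nonneg_left hA2' (by positivity : (0:ℝ) ≤ 2 * φ ^ 2)
          have := mul_le_mul_of_nonneg_left hB2 (by norm_num : (0:ℝ) ≤ 2)
          linarith
        _ = t * ((2 * φ ^ 2 * Real.exp (4 * |lam - alp ^ 2 / 2|) +
            2 * lam ^ 2 * Real.exp (2 * lam)) * Real.exp (4 * (alp * |z|))) := by ring
        _ ≤ t * ((φ + 1) ^ 2 * ((2 * Real.exp (4 * |lam - alp ^ 2 / 2|) +
            2 * lam ^ 2 * Real.exp (2 * lam)) * Real.exp (4 * (alp * |z|)))) := by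
          apply mul_le_mul_of_nonneg_left ?_ ht0.le
          have hs : 2 * φ ^ 2 * Real.exp (4 * |lam - alp ^ 2 / 2|) +
              2 * lam ^ 2 * Real.exp (2 * lam) ≤
              (φ + 1) ^ 2 * (2 * Real.exp (4 * |lam - alp ^ 2 / 2|) +
                2 * lam ^ 2 * Real.exp (2 * lam)) := by
            nlinarith [mul_le_mul_of_nonneg_left hφ1 (le_of_lt e1),
              mul_le_mul_of_nonneg_left hφ2 (by positivity : (0:ℝ) ≤ lam ^ 2 * Real.exp (2 * lam))]
          calc (2 * φ ^ 2 * Real.exp (4 * |lam - alp ^ 2 / 2|) +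
              2 * lam ^ 2 * Real.exp (2 * lam)) * Real.exp (4 * (alp * |z|)) ≤
              ((φ + 1) ^ 2 * (2 * Real.exp (4 * |lam - alp ^ 2 / 2|) +
                2 * lam ^ 2 * Real.exp (2 * lam))) * Real.exp (4 * (alp * |z|)) :=
                mul_le_mul_of_nonneg_right hs e3.le
            _ = (φ + 1) ^ 2 * ((2 * Real.exp (4 * |lam - alp ^ 2 / 2|) +
                2 * lam ^ 2 * Real.exp (2 * lam)) * Real.exp (4 * (alp * |z|))) := by ring
    -- exponential-Gaussian bound
    have hexp : Real.exp (4 * (alp * |z|)) * Real.exp (-z ^ 2 / 2) ≤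
        Real.exp (16 * alp ^ 2) * Real.exp (-(1/4) * z ^ 2) := by
      rw [← Real.exp_add, ← Real.exp_add]
      apply Real.exp_le_exp.mpr
      nlinarith [sq_nonneg (4 * alp - |z| / 2), sq_abs z, abs_nonneg z]
    have hgnn : 0 ≤ gaussDensity z := by unfold gaussDensity; positivity
    calc (jfun lam alp t φ z - φ) ^ 2 * gaussDensity z ≤
        (t * ((φ + 1) ^ 2 * ((2 * Real.exp (4 * |lam - alp ^ 2 / 2|) +
          2 * lam ^ 2 * Real.exp (2 * lam)) * Real.exp (4 * (alp * |z|))))) * gaussDensity z :=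
        mul_le_mul_of_nonneg_right h1 hgnn
      _ = (t * (φ + 1) ^ 2 * ((2 * Real.exp (4 * |lam - alp ^ 2 / 2|) +
          2 * lam ^ 2 * Real.exp (2 * lam)) / Real.sqrt (2 * Real.pi))) *
          (Real.exp (4 * (alp * |z|)) * Real.exp (-z ^ 2 / 2)) := by
        unfold gaussDensity; ring
      _ ≤ (t * (φ + 1) ^ 2 * ((2 * Real.exp (4 * |lam - alp ^ 2 / 2|) +
          2 * lam ^ 2 * Real.exp (2 * lam)) / Real.sqrt (2 * Real.pi))) *
          (Real.exp (16 * alp ^ 2) * Real.exp (-(1/4) * z ^ 2)) := by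
        apply mul_le_mul_of_nonneg_left hexp (by positivity)
      _ = t * (φ + 1) ^ 2 * (K * Real.exp (-(1/4) * z ^ 2)) := by
        rw [hKdef]; ring
  -- integrate
  have hDint : Integrable (fun z : ℝ => t * (φ + 1) ^ 2 * (K * Real.exp (-(1/4) * z ^ 2))) := by
    exact (((integrable_exp_neg_mul_sq (by norm_num : (0:ℝ) < 1/4)).const_mul K).const_mul
      (t * (φ + 1) ^ 2))
  have hnn : ∀ z : ℝ, 0 ≤ (jfun lam alp t φ z - φ) ^ 2 * gaussDensity z := fun z =>
    mul_nonneg (sq_nonneg _) (by unfold gaussDensity; positivity)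
  have hmono := integral_mono_of_nonneg (Filter.Eventually.of_forall hnn) hDint
    (Filter.Eventually.of_forall key)
  have hint : (∫ z : ℝ, t * (φ + 1) ^ 2 * (K * Real.exp (-(1/4) * z ^ 2))) =
      t * (φ + 1) ^ 2 * (K * Real.sqrt (4 * Real.pi)) := by
    rw [integral_const_mul, integral_const_mul, integral_gaussian]
    congr 2
    rw [show Real.pi / (1/4) = 4 * Real.pi by ring]
  rw [hint] at hmono
  have hfin : t * (φ + 1) ^ 2 * (K * Real.sqrt (4 * Real.pi)) ≤
      (K * Real.sqrt (4 * Real.pi) + 1) * t * (φ + 1) ^ 2 := by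
    nlinarith [mul_nonneg ht0.le (sq_nonneg (φ + 1))]
  linarith
end

section
/- Let w : [0, ∞) → ℝ be Borel measurable with −1/c ≤ w(x) ≤ 0 for all x ≥ 0. Then −1/c ≤ J₀w(φ) ≤ 0 for every φ ≥ 0. (This is the inductive step showing that the recursively defined value functions v₀ = J₀0, vₙ = J₀vₙ₋₁ all take values in [−1/c, 0].) -/
open MeasureTheory Real

/-- Deterministic evolution of the odds process between observations. -/
noncomputable def varphi (lam t x : ℝ) : ℝ := Real.exp (lam * t) * (x + 1) - 1

/-- The averaging operator `K`: Gaussian expectation of `w` applied to the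
one-step odds update. -/
noncomputable def Kop (lam alp : ℝ) (w : ℝ → ℝ) (t φ : ℝ) : ℝ :=
  ∫ z : ℝ, w (jfun lam alp t φ z) * gaussDensity z

/-- The jump operator `J`: running cost until the next observation at time `t`,
plus the discounted continuation value after that observation. -/
noncomputable def Jop (lam alp c : ℝ) (w : ℝ → ℝ) (t φ : ℝ) : ℝ :=
  (∫ u in (0:ℝ)..t, Real.exp (-(lam * u)) * (varphi lam u φ - lam / c)) +
    (if 0 < t then Real.exp (-(lam * t)) * Kop lam alp w t φ else 0)

/-- The optimized jump operator `J₀ w(φ) = inf_{t ≥ 0} J w(t, φ)`. -/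
noncomputable def J0op (lam alp c : ℝ) (w : ℝ → ℝ) (φ : ℝ) : ℝ :=
  ⨅ t : Set.Ici (0:ℝ), Jop lam alp c w t φ

lemma gaussDensity_integrable : Integrable gaussDensity := by
  have h : Integrable (fun x : ℝ => Real.exp (-(1/2) * x^2)) :=
    integrable_exp_neg_mul_sq (by norm_num)
  have : gaussDensity = fun x => Real.exp (-(1/2) * x^2) / Real.sqrt (2 * Real.pi) := by
    ext x; unfold gaussDensity; ring_nf
  rw [this]
  exact h.div_const _

lemma gaussDensity_integral : (∫ z : ℝ, gaussDensity z) = 1 := by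
  unfold gaussDensity
  rw [integral_div]
  have h : (fun x : ℝ => Real.exp (-x^2/2)) = fun x => Real.exp (-(1/2) * x^2) := by
    ext x; ring_nf
  rw [h, integral_gaussian]
  rw [div_eq_one_iff_eq (by positivity)]
  rw [show (π / (1/2)) = 2 * π by ring]

lemma exp_neg_integral (lam t : ℝ) (h : lam ≠ 0) :
    (∫ u in (0:ℝ)..t, Real.exp (-(lam*u))) = (1 - Real.exp (-(lam*t)))/lam := by
  have key : ∀ u : ℝ, HasDerivAt (fun u => -Real.exp (-(lam*u))/lam) (Real.exp (-(lam*u))) u := by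
    intro u
    have h1 : HasDerivAt (fun u : ℝ => -(lam*u)) (-lam) u := by
      simpa using ((hasDerivAt_id u).const_mul (-lam))
    have h2 := (h1.exp.neg.div_const lam)
    refine h2.congr_deriv ?_
    field_simp
  rw [intervalIntegral.integral_eq_sub_of_hasDerivAt (fun u _ => key u)
    ((Real.continuous_exp.comp (by continuity)).intervalIntegrable 0 t)]
  field_simp
  rw [mul_zero, neg_zero, Real.exp_zero]
  ring

lemma jfun_nonneg (lam alp t φ z : ℝ) (hlam : 0 ≤ lam) (ht : 0 ≤ t) (hφ : 0 ≤ φ) :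
    0 ≤ jfun lam alp t φ z := by
  unfold jfun
  have h1 : 0 ≤ Real.exp (alp * z * Real.sqrt t + (lam - alp ^ 2 / 2) * t) * φ := by positivity
  have h2 : 0 ≤ ∫ u in (0:ℝ)..t,
      lam * Real.exp ((lam + alp * z / Real.sqrt t) * u - alp ^ 2 * u ^ 2 / (2 * t)) := by
    apply intervalIntegral.integral_nonneg ht
    intro u _
    positivity
  linarith


/-- If `−1/c ≤ w ≤ 0` on `[0, ∞)`, then `−1/c ≤ J₀w(φ) ≤ 0` for every `φ ≥ 0`. -/
theorem J0op_bounds (lam alp c : ℝ) (hlam : 0 < lam) (halp : 0 < alp) (hc : 0 < c)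
    (w : ℝ → ℝ) (hw : Measurable w)
    (hwl : ∀ x : ℝ, 0 ≤ x → -1 / c ≤ w x) (hwu : ∀ x : ℝ, 0 ≤ x → w x ≤ 0)
    (φ : ℝ) (hφ : 0 ≤ φ) :
    -1 / c ≤ J0op lam alp c w φ ∧ J0op lam alp c w φ ≤ 0 := by
  -- Kop lower bound for any t ≥ 0
  have hKop : ∀ t : ℝ, 0 ≤ t → -1/c ≤ Kop lam alp w t φ := by
    intro t ht
    by_cases hint : Integrable (fun z => w (jfun lam alp t φ z) * gaussDensity z)
    · have hle : (fun z => (-1/c) * gaussDensity z) ≤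
          fun z => w (jfun lam alp t φ z) * gaussDensity z := by
        intro z
        exact mul_le_mul_of_nonneg_right
          (hwl _ (jfun_nonneg lam alp t φ z hlam.le ht hφ)) (gaussDensity_nonneg z)
      have h1 := integral_mono (gaussDensity_integrable.const_mul (-1/c)) hint hle
      rw [integral_const_mul, gaussDensity_integral] at h1
      unfold Kop
      linarith
    · unfold Kop
      rw [integral_undef hint]
      have h1 : (0:ℝ) < 1/c := by positivity
      rw [neg_div]
      linarith
  -- lower bound for Jop at every t ≥ 0
  have key : ∀ t : ℝ, 0 ≤ t → -1/c ≤ Jop lam alp c w t φ := by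
    intro t ht
    rcases eq_or_lt_of_le ht with h | h
    · have h1 : (0:ℝ) < 1/c := by positivity
      simp [Jop, ← h, neg_div]
      linarith
    · unfold Jop
      rw [if_pos h]
      -- running cost bound
      have hrun : (∫ u in (0:ℝ)..t, Real.exp (-(lam*u)) * (-(lam/c))) ≤
          ∫ u in (0:ℝ)..t, Real.exp (-(lam * u)) * (varphi lam u φ - lam / c) := by
        apply intervalIntegral.integral_mono_on ht
        · exact (Continuous.intervalIntegrable (by continuity) 0 t)
        · exact (Continuous.intervalIntegrable (by unfold varphi; continuity) 0 t)
        · intro u hu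
          have hvar : 0 ≤ varphi lam u φ := by
            unfold varphi
            have : (1:ℝ) ≤ Real.exp (lam * u) := by
              apply Real.one_le_exp
              have := hu.1
              positivity
            nlinarith
          have : 0 ≤ Real.exp (-(lam*u)) := (Real.exp_pos _).le
          nlinarith
      have hcomp : (∫ u in (0:ℝ)..t, Real.exp (-(lam*u)) * (-(lam/c))) =
          -(1 - Real.exp (-(lam*t)))/c := by
        rw [intervalIntegral.integral_mul_const, exp_neg_integral lam t hlam.ne']
        field_simp
      have hK := hKop t ht
      have hexp : 0 ≤ Real.exp (-(lam*t)) := (Real.exp_pos _).le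
      have h2 : Real.exp (-(lam*t)) * (-1/c) ≤ Real.exp (-(lam*t)) * Kop lam alp w t φ :=
        mul_le_mul_of_nonneg_left hK hexp
      have hexple : Real.exp (-(lam*t)) ≤ 1 := by
        apply Real.exp_le_one_iff.mpr
        nlinarith
      rw [hcomp] at hrun
      have : -(1 - Real.exp (-(lam*t)))/c + Real.exp (-(lam*t)) * (-1/c) = -1/c := by
        field_simp; ring
      linarith
  have hne : Nonempty (Set.Ici (0:ℝ)) := ⟨⟨0, Set.self_mem_Ici⟩⟩
  have hbdd : BddBelow (Set.range fun t : Set.Ici (0:ℝ) => Jop lam alp c w t φ) := by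
    refine ⟨-1/c, ?_⟩
    rintro x ⟨⟨t, ht⟩, rfl⟩
    exact key t ht
  constructor
  · exact le_ciInf fun t => key t t.2
  · have h0 : Jop lam alp c w ((⟨0, Set.self_mem_Ici⟩ : Set.Ici (0:ℝ)) : ℝ) φ = 0 := by
      simp [Jop]
    calc J0op lam alp c w φ ≤ Jop lam alp c w ((⟨0, Set.self_mem_Ici⟩ : Set.Ici (0:ℝ)) : ℝ) φ :=
          ciInf_le hbdd _
      _ = 0 := h0
end

section
/- For φ ≥ 0 define t₀*(φ) = max(0, (1/λ)·log((c + λ)/(c(φ + 1)))) and f(t) = ∫₀ᵗ e^{−λu}(varphi(u, φ) − λ/c) du for t ≥ 0. Then: (i) if φ ≤ λ/c, varphi(t₀*(φ), φ) = λ/c; and (ii) f attains its global minimum over [0, ∞) at t = t₀*(φ), i.e. inf_{t ≥ 0} f(t) = f(t₀*(φ)). Equivalently, J₀0(φ) = J0(t₀*(φ), φ), where 0 denotes the identically zero function. -/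
open MeasureTheory Real

/-- With no observations remaining (`w = 0`), the jump operator reduces to the
running cost `J0(t, φ) = ∫₀ᵗ e^{−λu}(varphi(u, φ) − λ/c) du`. -/
noncomputable def Jzero (lam c t φ : ℝ) : ℝ :=
  ∫ u in (0:ℝ)..t, Real.exp (-(lam * u)) * (varphi lam u φ - lam / c)

lemma Jzero_eq (lam c φ : ℝ) (hlam : 0 < lam) (hc : 0 < c) (t : ℝ) :
    Jzero lam c t φ = (φ + 1) * t + (1 + lam / c) / lam * (Real.exp (-(lam * t)) - 1) := by
  have h1 : ∀ u ∈ Set.uIcc (0:ℝ) t, Real.exp (-(lam * u)) * (varphi lam u φ - lam / c)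
      = (φ + 1) - (1 + lam / c) * Real.exp (-(lam * u)) := by
    intro u _
    simp only [varphi]
    rw [Real.exp_neg]
    have h := (Real.exp_pos (lam * u)).ne'
    field_simp
    ring
  have hl := hlam.ne'
  have hint : ∫ u in (0:ℝ)..t, Real.exp (-(lam * u)) = lam⁻¹ * (1 - Real.exp (-(lam * t))) := by
    have h2 : ∀ u : ℝ, Real.exp (-(lam * u)) = Real.exp ((-lam) * u) := by
      intro u; ring_nf
    simp only [h2]
    rw [intervalIntegral.integral_comp_mul_left Real.exp (by linarith : (-lam) ≠ 0)]
    rw [integral_exp]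
    simp only [smul_eq_mul, mul_zero, Real.exp_zero, neg_mul]
    field_simp
    ring
  have hcont : Continuous fun u : ℝ => (1 + lam / c) * Real.exp (-(lam * u)) := by
    continuity
  simp only [Jzero]
  rw [intervalIntegral.integral_congr h1,
    intervalIntegral.integral_sub intervalIntegrable_const (hcont.intervalIntegrable 0 t),
    intervalIntegral.integral_const]
  rw [intervalIntegral.integral_const_mul, hint]
  field_simp
  ring

/-- For `t₀*(φ) = max(0, (1/λ)log((c + λ)/(c(φ + 1))))`:
(i) if `φ ≤ λ/c`, then `varphi(t₀*(φ), φ) = λ/c`; and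
(ii) `t ↦ J0(t, φ)` attains its global infimum over `[0, ∞)` at `t₀*(φ)`, i.e.
`J₀0(φ) = J0(t₀*(φ), φ)`. -/
theorem Jzero_min_at_tstar (lam c : ℝ) (hlam : 0 < lam) (hc : 0 < c)
    (φ : ℝ) (hφ : 0 ≤ φ) :
    (φ ≤ lam / c →
        varphi lam (max 0 ((1 / lam) * Real.log ((c + lam) / (c * (φ + 1))))) φ = lam / c) ∧
    (∀ t : ℝ, 0 ≤ t →
        Jzero lam c (max 0 ((1 / lam) * Real.log ((c + lam) / (c * (φ + 1))))) φ ≤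
          Jzero lam c t φ) ∧
    (⨅ t : Set.Ici (0:ℝ), Jzero lam c t φ) =
      Jzero lam c (max 0 ((1 / lam) * Real.log ((c + lam) / (c * (φ + 1))))) φ := by
  set A : ℝ := (c + lam) / (c * (φ + 1)) with hA
  have hφ1 : (0:ℝ) < φ + 1 := by linarith
  have hApos : 0 < A := div_pos (by linarith) (by positivity)
  set ts : ℝ := max 0 ((1 / lam) * Real.log A) with hts
  have hts0 : 0 ≤ ts := le_max_left _ _
  -- part (i)
  have part1 : φ ≤ lam / c → varphi lam ts φ = lam / c := by
    intro h
    have hA1 : 1 ≤ A := by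
      rw [hA, le_div_iff₀ (by positivity)]
      have : c * φ ≤ lam := by
        rw [le_div_iff₀ hc] at h; linarith [h]
      nlinarith
    have hlog : 0 ≤ Real.log A := Real.log_nonneg hA1
    have htsv : ts = (1 / lam) * Real.log A := by
      rw [hts, max_eq_right]
      exact mul_nonneg (by positivity) hlog
    rw [varphi, htsv]
    have : lam * ((1 / lam) * Real.log A) = Real.log A := by
      field_simp
    rw [this, Real.exp_log hApos, hA]
    field_simp
    ring
  -- the bracket inequality
  have hB : ∀ t : ℝ, 0 ≤ t →
      0 ≤ (t - ts) * ((φ + 1) - (1 + lam / c) * Real.exp (-(lam * ts))) := by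
    intro t ht
    rcases le_or_gt φ (lam / c) with h | h
    · have hA1 : 1 ≤ A := by
        rw [hA, le_div_iff₀ (by positivity)]
        have : c * φ ≤ lam := by rw [le_div_iff₀ hc] at h; linarith [h]
        nlinarith
      have hlog : 0 ≤ Real.log A := Real.log_nonneg hA1
      have htsv : ts = (1 / lam) * Real.log A := by
        rw [hts, max_eq_right]
        exact mul_nonneg (by positivity) hlog
      have hexp : Real.exp (-(lam * ts)) = A⁻¹ := by
        rw [htsv]
        have : -(lam * ((1 / lam) * Real.log A)) = Real.log A⁻¹ := by
          rw [Real.log_inv]; field_simp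
        rw [this, Real.exp_log (by positivity)]
      have hz : (φ + 1) - (1 + lam / c) * Real.exp (-(lam * ts)) = 0 := by
        rw [hexp, hA]
        field_simp
        ring
      rw [hz, mul_zero]
    · have hA1 : A < 1 := by
        rw [hA, div_lt_one (by positivity)]
        have : lam < c * φ := by rw [div_lt_iff₀ hc] at h; linarith [h]
        nlinarith
      have hlog : Real.log A < 0 := Real.log_neg hApos hA1
      have htsv : ts = 0 := by
        rw [hts, max_eq_left]
        have h1 : 0 < 1 / lam := by positivity
        nlinarith
      rw [htsv]
      simp only [mul_zero, neg_zero, Real.exp_zero, mul_one, sub_zero]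
      have hcpos : 0 < lam / c := by positivity
      nlinarith
  -- minimality
  have part2 : ∀ t : ℝ, 0 ≤ t → Jzero lam c ts φ ≤ Jzero lam c t φ := by
    intro t ht
    rw [Jzero_eq lam c φ hlam hc, Jzero_eq lam c φ hlam hc]
    set E : ℝ := Real.exp (-(lam * ts)) with hE
    set K : ℝ := (1 + lam / c) / lam with hK
    have hKpos : 0 < K := by positivity
    have hKl : K * lam = 1 + lam / c := by rw [hK]; field_simp
    have hexpb : E * (1 - lam * (t - ts)) ≤ Real.exp (-(lam * t)) := by
      have h1 : (-(lam * (t - ts))) + 1 ≤ Real.exp (-(lam * (t - ts))) := Real.add_one_le_exp _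
      have h2 : Real.exp (-(lam * t)) = E * Real.exp (-(lam * (t - ts))) := by
        rw [hE, ← Real.exp_add]; ring_nf
      rw [h2]
      nlinarith [Real.exp_pos (-(lam * ts))]
    have h3 : K * (E * (1 - lam * (t - ts))) ≤ K * Real.exp (-(lam * t)) :=
      mul_le_mul_of_nonneg_left hexpb hKpos.le
    have h6 : K * E - (1 + lam / c) * (E * (t - ts)) ≤ K * Real.exp (-(lam * t)) := by
      calc K * E - (1 + lam / c) * (E * (t - ts))
          = K * (E * (1 - lam * (t - ts))) := by rw [← hKl]; ring
        _ ≤ _ := h3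
    have hkey := hB t ht
    nlinarith [h6, hkey]
  refine ⟨part1, part2, ?_⟩
  have hbdd : BddBelow (Set.range fun t : Set.Ici (0:ℝ) => Jzero lam c t φ) :=
    ⟨Jzero lam c ts φ, by rintro y ⟨⟨t, ht⟩, rfl⟩; exact part2 t ht⟩
  refine le_antisymm (ciInf_le hbdd ⟨ts, hts0⟩) (le_ciInf ?_)
  rintro ⟨t, ht⟩
  exact part2 t ht
end

section
/- For every k ≥ 1, Φₖ is integrable and E[Φₖ | Fₖ₋₁] = e^{λt}(Φₖ₋₁ + 1) − 1 almost surely. -/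
open MeasureTheory Real

/-- The discretely observed odds chain: `Φ₀ = φ` and `Φₖ = j(t, Φₖ₋₁, Zₖ)`. -/
noncomputable def oddsChain {Ω : Type*} (lam alp t φ : ℝ) (Z : ℕ → Ω → ℝ) : ℕ → Ω → ℝ
  | 0 => fun _ => φ
  | k + 1 => fun ω => jfun lam alp t (oddsChain lam alp t φ Z k ω) (Z (k + 1) ω)

/-- The filtration `Fₖ = σ(Z₁, …, Zₖ)` generated by the first `k` observations
(`F₀` is trivial). -/
def obsFiltration {Ω : Type*} (Z : ℕ → Ω → ℝ) (k : ℕ) : MeasurableSpace Ω :=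
  ⨆ i ∈ Set.Icc 1 k, MeasurableSpace.comap (Z i) inferInstance

open ProbabilityTheory

lemma obsFiltration_def {Ω : Type*} (Z : ℕ → Ω → ℝ) (k : ℕ) :
    obsFiltration Z k = ⨆ i ∈ Set.Icc 1 k, MeasurableSpace.comap (Z i) inferInstance := rfl


lemma gaussianReal01_eq :
    gaussianReal 0 1 = volume.withDensity
      (fun z => ((gaussianPDFReal 0 1 z).toNNReal : ENNReal)) := by
  rw [gaussianReal_of_var_ne_zero 0 one_ne_zero]
  rfl

lemma integrable_exp_mul_gaussPDF (c : ℝ) :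
    Integrable (fun z : ℝ => gaussianPDFReal 0 1 z * Real.exp (c * z)) volume := by
  have h : ∀ z : ℝ, gaussianPDFReal 0 1 z * Real.exp (c * z)
      = (Real.sqrt (2 * π))⁻¹ * Real.exp (c ^ 2 / 2) * Real.exp (-(2⁻¹) * (z - c) ^ 2) := by
    intro z
    simp only [gaussianPDFReal, NNReal.coe_one, mul_one, sub_zero]
    rw [mul_assoc, mul_assoc, ← Real.exp_add, ← Real.exp_add]
    congr 1
    ring_nf
  simp_rw [h]
  exact ((integrable_exp_neg_mul_sq (by norm_num : (0:ℝ) < 2⁻¹)).comp_sub_right c).const_mul _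

lemma integral_exp_mul_gaussPDF (c : ℝ) :
    ∫ z : ℝ, gaussianPDFReal 0 1 z * Real.exp (c * z) = Real.exp (c ^ 2 / 2) := by
  have h : ∀ z : ℝ, gaussianPDFReal 0 1 z * Real.exp (c * z)
      = (Real.sqrt (2 * π))⁻¹ * Real.exp (c ^ 2 / 2) * Real.exp (-(2⁻¹) * (z - c) ^ 2) := by
    intro z
    simp only [gaussianPDFReal, NNReal.coe_one, mul_one, sub_zero]
    rw [mul_assoc, mul_assoc, ← Real.exp_add, ← Real.exp_add]
    congr 1
    ring_nf
  simp_rw [h]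
  rw [MeasureTheory.integral_const_mul,
    integral_sub_right_eq_self (fun z => Real.exp (-(2⁻¹) * z ^ 2)) c,
    integral_gaussian]
  have : π / 2⁻¹ = 2 * π := by ring
  rw [this]
  rw [mul_comm ((Real.sqrt (2*π))⁻¹) _, mul_assoc, inv_mul_cancel₀, mul_one]
  positivity

lemma integrable_exp_mul_gaussianReal (c : ℝ) :
    Integrable (fun z => Real.exp (c * z)) (gaussianReal 0 1) := by
  rw [gaussianReal01_eq,
    integrable_withDensity_iff_integrable_coe_smul ((measurable_gaussianPDFReal 0 1).real_toNNReal)]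
  have : ∀ z : ℝ, ((gaussianPDFReal 0 1 z).toNNReal : ℝ) • Real.exp (c * z)
      = gaussianPDFReal 0 1 z * Real.exp (c * z) := by
    intro z
    rw [smul_eq_mul, Real.coe_toNNReal _ (gaussianPDFReal_nonneg 0 1 z)]
  simp_rw [this]
  exact integrable_exp_mul_gaussPDF c

lemma integral_exp_mul_gaussianReal (c : ℝ) :
    ∫ z, Real.exp (c * z) ∂(gaussianReal 0 1) = Real.exp (c ^ 2 / 2) := by
  rw [gaussianReal01_eq, integral_withDensity_eq_integral_smul ((measurable_gaussianPDFReal 0 1).real_toNNReal)]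
  have : ∀ z : ℝ, (gaussianPDFReal 0 1 z).toNNReal • Real.exp (c * z)
      = gaussianPDFReal 0 1 z * Real.exp (c * z) := by
    intro z
    rw [NNReal.smul_def, smul_eq_mul, Real.coe_toNNReal _ (gaussianPDFReal_nonneg 0 1 z)]
  simp_rw [this]
  exact integral_exp_mul_gaussPDF c

noncomputable def innerf (lam alp t z u : ℝ) : ℝ :=
  lam * Real.exp ((lam + alp * z / Real.sqrt t) * u - alp ^ 2 * u ^ 2 / (2 * t))

lemma innerf_cont (lam alp t : ℝ) :
    Continuous (fun p : ℝ × ℝ => innerf lam alp t p.1 p.2) := by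
  unfold innerf; fun_prop

lemma innerf_nonneg (lam alp t z u : ℝ) (hlam : 0 ≤ lam) : 0 ≤ innerf lam alp t z u :=
  mul_nonneg hlam (Real.exp_pos _).le

noncomputable def hB (lam alp t z : ℝ) : ℝ := ∫ u in Set.Ioc (0:ℝ) t, innerf lam alp t z u

lemma innerf_le (lam alp t : ℝ) (hlam : 0 < lam) (halp : 0 < alp) (ht : 0 < t) (z : ℝ)
    {u : ℝ} (hu : u ∈ Set.Ioc (0:ℝ) t) :
    innerf lam alp t z u ≤ lam * Real.exp (lam * t + alp * Real.sqrt t * |z|) := by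
  have hst : (0:ℝ) < Real.sqrt t := Real.sqrt_pos.mpr ht
  refine mul_le_mul_of_nonneg_left (Real.exp_le_exp.mpr ?_) hlam.le
  have h0 : alp ^ 2 * u ^ 2 / (2 * t) ≥ 0 := by positivity
  have h1 : lam * u ≤ lam * t := mul_le_mul_of_nonneg_left hu.2 hlam.le
  have h2 : alp * z / Real.sqrt t * u ≤ alp * |z| / Real.sqrt t * u := by
    apply mul_le_mul_of_nonneg_right _ hu.1.le
    gcongr
    exact le_abs_self z
  have h3 : alp * |z| / Real.sqrt t * u ≤ alp * |z| / Real.sqrt t * t :=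
    mul_le_mul_of_nonneg_left hu.2 (by positivity)
  have h4 : alp * |z| / Real.sqrt t * t = alp * Real.sqrt t * |z| := by
    rw [div_mul_eq_mul_div, eq_comm, eq_div_iff hst.ne']
    have hss := Real.mul_self_sqrt ht.le
    linear_combination (alp * |z|) * hss
  nlinarith [h0, h1, h2, h3, h4]

lemma stronglyMeasurable_hB (lam alp t : ℝ) : StronglyMeasurable (hB lam alp t) := by
  unfold hB
  exact (innerf_cont lam alp t).stronglyMeasurable.integral_prod_right'

lemma hB_le (lam alp t : ℝ) (hlam : 0 < lam) (halp : 0 < alp) (ht : 0 < t) (z : ℝ) :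
    ‖hB lam alp t z‖ ≤ lam * Real.exp (lam * t + alp * Real.sqrt t * |z|) * t := by
  have := norm_setIntegral_le_of_norm_le_const (μ := volume) (s := Set.Ioc (0:ℝ) t)
    (f := fun u => innerf lam alp t z u) (C := lam * Real.exp (lam * t + alp * Real.sqrt t * |z|))
    (by simp [measure_Ioc_lt_top])
    (fun u hu => by
      rw [Real.norm_eq_abs, abs_of_nonneg (innerf_nonneg lam alp t z u hlam.le)]
      exact innerf_le lam alp t hlam halp ht z hu)
  simpa [hB, Real.volume_Ioc, ENNReal.toReal_ofReal ht.le, Measure.real] using this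

lemma integrable_exp_abs_gaussianReal (c : ℝ) :
    Integrable (fun z => Real.exp (c * |z|)) (gaussianReal 0 1) := by
  refine ((_root_.integrable_exp_mul_gaussianReal c).add
    (_root_.integrable_exp_mul_gaussianReal (-c))).mono' (Continuous.aestronglyMeasurable (by fun_prop)) (ae_of_all _ fun z => ?_)
  rw [Real.norm_eq_abs, abs_of_nonneg (Real.exp_pos _).le]
  rcases abs_choice z with h | h
  · rw [h]
    exact le_add_of_nonneg_right (Real.exp_pos _).le
  · rw [h, mul_neg, ← neg_mul]
    exact le_add_of_nonneg_left (Real.exp_pos _).le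

lemma integrable_hB (lam alp t : ℝ) (hlam : 0 < lam) (halp : 0 < alp) (ht : 0 < t) :
    Integrable (hB lam alp t) (gaussianReal 0 1) := by
  have hg : Integrable (fun z : ℝ => lam * Real.exp (lam * t + alp * Real.sqrt t * |z|) * t)
      (gaussianReal 0 1) := by
    have heq : (fun z : ℝ => lam * Real.exp (lam * t + alp * Real.sqrt t * |z|) * t)
        = fun z : ℝ => (lam * Real.exp (lam * t) * t) * Real.exp ((alp * Real.sqrt t) * |z|) := by
      funext z; rw [Real.exp_add]; ring
    rw [heq]
    exact (integrable_exp_abs_gaussianReal _).const_mul _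
  exact hg.mono' (stronglyMeasurable_hB lam alp t).aestronglyMeasurable
    (ae_of_all _ (hB_le lam alp t hlam halp ht))

lemma integrable_innerf_prod (lam alp t : ℝ) (hlam : 0 < lam) (halp : 0 < alp) (ht : 0 < t) :
    Integrable (Function.uncurry (fun z u => innerf lam alp t z u))
      ((gaussianReal 0 1).prod (volume.restrict (Set.Ioc (0:ℝ) t))) := by
  refine (integrable_prod_iff ?_).mpr ⟨ae_of_all _ fun z => ?_, ?_⟩
  · exact (innerf_cont lam alp t).aestronglyMeasurable
  · exact Continuous.integrableOn_Ioc (by unfold innerf; fun_prop)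
  · refine (integrable_hB lam alp t hlam halp ht).congr (ae_of_all _ fun z => ?_)
    unfold hB
    refine (setIntegral_congr_fun measurableSet_Ioc fun u _ => ?_).symm
    simp only [Function.uncurry, Real.norm_eq_abs,
      abs_of_nonneg (innerf_nonneg lam alp t z u hlam.le)]

lemma integral_hB (lam alp t : ℝ) (hlam : 0 < lam) (halp : 0 < alp) (ht : 0 < t) :
    ∫ z, hB lam alp t z ∂(gaussianReal 0 1) = Real.exp (lam * t) - 1 := by
  have hswap := integral_integral_swap (integrable_innerf_prod lam alp t hlam halp ht)
  have h1 : ∫ z, hB lam alp t z ∂(gaussianReal 0 1)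
      = ∫ u in Set.Ioc (0:ℝ) t, ∫ z, innerf lam alp t z u ∂(gaussianReal 0 1) := hswap
  rw [h1]
  have h2 : ∀ u : ℝ, ∫ z, innerf lam alp t z u ∂(gaussianReal 0 1) = lam * Real.exp (lam * u) := by
    intro u
    have heq : (fun z => innerf lam alp t z u)
        = fun z => (lam * Real.exp (lam * u - alp ^ 2 * u ^ 2 / (2 * t)))
            * Real.exp ((alp * u / Real.sqrt t) * z) := by
      funext z
      unfold innerf
      rw [mul_assoc, ← Real.exp_add]
      congr 1
      ring_nf
    rw [heq, MeasureTheory.integral_const_mul, _root_.integral_exp_mul_gaussianReal,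
      mul_assoc, ← Real.exp_add]
    congr 1
    have hC : (alp * u / Real.sqrt t) ^ 2 / 2 = alp ^ 2 * u ^ 2 / (2 * t) := by
      rw [div_pow, Real.sq_sqrt ht.le]
      ring
    rw [hC]
    ring_nf
  rw [setIntegral_congr_fun measurableSet_Ioc fun u _ => h2 u,
    ← intervalIntegral.integral_of_le ht.le]
  have hderiv : ∀ u ∈ Set.uIcc (0:ℝ) t,
      HasDerivAt (fun y => Real.exp (lam * y)) (lam * Real.exp (lam * u)) u := by
    intro u _
    have := ((hasDerivAt_id u).const_mul lam).exp
    simpa [mul_comm] using this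
  rw [intervalIntegral.integral_eq_sub_of_hasDerivAt hderiv
    (Continuous.intervalIntegrable (by fun_prop) 0 t)]
  simp

lemma indep_mono {Ω : Type*} {_m : MeasurableSpace Ω} {μ : Measure Ω}
    {m₁ m₂ m₁' m₂' : MeasurableSpace Ω} (h : ProbabilityTheory.Indep m₁ m₂ μ)
    (h1 : m₁' ≤ m₁) (h2 : m₂' ≤ m₂) : ProbabilityTheory.Indep m₁' m₂' μ := by
  rw [ProbabilityTheory.Indep_iff] at h ⊢
  exact fun s t hs ht => h s t (h1 _ hs) (h2 _ ht)

lemma gA_cont (lam alp t : ℝ) :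
    Continuous (fun z : ℝ => Real.exp (alp * z * Real.sqrt t + (lam - alp ^ 2 / 2) * t)) := by
  fun_prop

lemma integrable_gA (lam alp t : ℝ) :
    Integrable (fun z : ℝ => Real.exp (alp * z * Real.sqrt t + (lam - alp ^ 2 / 2) * t))
      (gaussianReal 0 1) := by
  have heq : (fun z : ℝ => Real.exp (alp * z * Real.sqrt t + (lam - alp ^ 2 / 2) * t))
      = fun z : ℝ => Real.exp ((lam - alp ^ 2 / 2) * t) * Real.exp ((alp * Real.sqrt t) * z) := by
    funext z; rw [← Real.exp_add]; congr 1; ring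
  rw [heq]
  exact (_root_.integrable_exp_mul_gaussianReal _).const_mul _

lemma integral_gA (lam alp t : ℝ) (ht : 0 ≤ t) :
    ∫ z, Real.exp (alp * z * Real.sqrt t + (lam - alp ^ 2 / 2) * t) ∂(gaussianReal 0 1)
      = Real.exp (lam * t) := by
  have heq : (fun z : ℝ => Real.exp (alp * z * Real.sqrt t + (lam - alp ^ 2 / 2) * t))
      = fun z : ℝ => Real.exp ((lam - alp ^ 2 / 2) * t) * Real.exp ((alp * Real.sqrt t) * z) := by
    funext z; rw [← Real.exp_add]; congr 1; ring
  rw [heq, MeasureTheory.integral_const_mul, _root_.integral_exp_mul_gaussianReal, ← Real.exp_add]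
  congr 1
  have : (alp * Real.sqrt t) ^ 2 = alp ^ 2 * t := by
    rw [mul_pow, Real.sq_sqrt ht]
  rw [this]
  ring

lemma jfun_eq_s13 (lam alp t : ℝ) (ht : 0 ≤ t) (φ z : ℝ) :
    jfun lam alp t φ z
      = Real.exp (alp * z * Real.sqrt t + (lam - alp ^ 2 / 2) * t) * φ + hB lam alp t z := by
  rw [jfun, hB, intervalIntegral.integral_of_le ht]
  rfl

/-- For i.i.d. standard Gaussian innovations, each `Φₖ` (`k ≥ 1`) is integrable and
`E[Φₖ | Fₖ₋₁] = e^{λt}(Φₖ₋₁ + 1) − 1` almost surely. -/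
theorem oddsChain_condexp (lam alp t : ℝ) (hlam : 0 < lam) (halp : 0 < alp) (ht : 0 < t)
    {Ω : Type*} [MeasurableSpace Ω] (μ : MeasureTheory.Measure Ω) [IsProbabilityMeasure μ]
    (Z : ℕ → Ω → ℝ) (hZmeas : ∀ k, Measurable (Z k))
    (hZdist : ∀ k, 1 ≤ k → μ.map (Z k) = ProbabilityTheory.gaussianReal 0 1)
    (hZindep : ProbabilityTheory.iIndepFun Z μ)
    (φ : ℝ) (hφ : 0 ≤ φ) :
    ∀ k : ℕ, 1 ≤ k →
      Integrable (oddsChain lam alp t φ Z k) μ ∧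
        μ[oddsChain lam alp t φ Z k | obsFiltration Z (k - 1)] =ᵐ[μ]
          fun ω => Real.exp (lam * t) * (oddsChain lam alp t φ Z (k - 1) ω + 1) - 1 := by

  classical
  have hle : ∀ n, obsFiltration Z n ≤ ‹MeasurableSpace Ω› := by
    intro n
    rw [obsFiltration_def]
    exact iSup₂_le fun i _ => (hZmeas i).comap_le
  have hcomap_le : ∀ i n, i ∈ Set.Icc 1 n →
      MeasurableSpace.comap (Z i) inferInstance ≤ obsFiltration Z n := by
    intro i n hi
    rw [obsFiltration_def]
    exact le_biSup (fun i => MeasurableSpace.comap (Z i) inferInstance) hi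
  have hmono : ∀ k, obsFiltration Z k ≤ obsFiltration Z (k + 1) := by
    intro k
    rw [obsFiltration_def Z k]
    exact iSup₂_le fun i hi => hcomap_le i (k + 1) ⟨hi.1, hi.2.trans (Nat.le_succ k)⟩
  -- measurability of the chain
  have hmeas : ∀ k, Measurable[obsFiltration Z k] (oddsChain lam alp t φ Z k) := by
    intro k
    induction k with
    | zero => exact measurable_const
    | succ k ih =>
      have hZm : Measurable[obsFiltration Z (k + 1)] (Z (k + 1)) :=
        (measurable_iff_comap_le.mpr le_rfl).mono
          (hcomap_le (k + 1) (k + 1) (by simp)) le_rfl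
      have hprev : Measurable[obsFiltration Z (k + 1)] (oddsChain lam alp t φ Z k) :=
        ih.mono (hmono k) le_rfl
      have : (oddsChain lam alp t φ Z (k + 1)) = fun ω =>
          Real.exp (alp * Z (k + 1) ω * Real.sqrt t + (lam - alp ^ 2 / 2) * t)
            * oddsChain lam alp t φ Z k ω + hB lam alp t (Z (k + 1) ω) := by
        funext ω
        exact jfun_eq_s13 lam alp t ht.le _ _
      rw [this]
      exact (((gA_cont lam alp t).measurable.comp hZm).mul hprev).add
        ((stronglyMeasurable_hB lam alp t).measurable.comp hZm)
  -- independence of Z (k+1) from the past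
  have hindep : ∀ k, ProbabilityTheory.Indep
      (MeasurableSpace.comap (Z (k + 1)) inferInstance) (obsFiltration Z k) μ := by
    intro k
    have h := ProbabilityTheory.indep_biSup_compl (fun n => (hZmeas n).comap_le)
      hZindep.iIndep {k + 1}
    rw [obsFiltration_def]
    refine indep_mono h (le_biSup (fun n => MeasurableSpace.comap (Z n) inferInstance)
      (Set.mem_singleton (k + 1))) (biSup_mono fun i hi hmem => ?_)
    simp only [Set.mem_Icc] at hi
    simp only [Set.mem_singleton_iff] at hmem
    omega
  -- pushing integrability and integrals along Z k
  have hcomp_int : ∀ (f : ℝ → ℝ) (k : ℕ), AEStronglyMeasurable f (gaussianReal 0 1) →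
      Integrable f (gaussianReal 0 1) → Integrable (fun ω => f (Z (k + 1) ω)) μ := by
    intro f k hfm hf
    have h1 : Integrable f (μ.map (Z (k + 1))) := by
      rw [hZdist (k + 1) (Nat.le_add_left 1 k)]; exact hf
    have h2 : AEStronglyMeasurable f (μ.map (Z (k + 1))) := by
      rw [hZdist (k + 1) (Nat.le_add_left 1 k)]; exact hfm
    exact (integrable_map_measure h2 (hZmeas (k + 1)).aemeasurable).mp h1
  have hcomp_integral : ∀ (f : ℝ → ℝ) (k : ℕ), AEStronglyMeasurable f (gaussianReal 0 1) →
      ∫ ω, f (Z (k + 1) ω) ∂μ = ∫ z, f z ∂(gaussianReal 0 1) := by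
    intro f k hfm
    have h2 : AEStronglyMeasurable f (μ.map (Z (k + 1))) := by
      rw [hZdist (k + 1) (Nat.le_add_left 1 k)]; exact hfm
    rw [← integral_map (hZmeas (k + 1)).aemeasurable h2, hZdist (k + 1) (Nat.le_add_left 1 k)]
  have hgAi : ∀ k : ℕ, Integrable
      (fun ω => Real.exp (alp * Z (k + 1) ω * Real.sqrt t + (lam - alp ^ 2 / 2) * t)) μ :=
    fun k => hcomp_int _ k (gA_cont lam alp t).aestronglyMeasurable (integrable_gA lam alp t)
  have hBi : ∀ k : ℕ, Integrable (fun ω => hB lam alp t (Z (k + 1) ω)) μ :=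
    fun k => hcomp_int _ k (stronglyMeasurable_hB lam alp t).aestronglyMeasurable
      (integrable_hB lam alp t hlam halp ht)
  -- independence of the factors
  have hIF : ∀ k : ℕ, ProbabilityTheory.IndepFun
      (fun ω => Real.exp (alp * Z (k + 1) ω * Real.sqrt t + (lam - alp ^ 2 / 2) * t))
      (oddsChain lam alp t φ Z k) μ := by
    intro k
    rw [ProbabilityTheory.IndepFun_iff_Indep]
    refine indep_mono (hindep k) ?_ ?_
    · rw [show (fun ω => Real.exp (alp * Z (k + 1) ω * Real.sqrt t + (lam - alp ^ 2 / 2) * t))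
        = (fun z => Real.exp (alp * z * Real.sqrt t + (lam - alp ^ 2 / 2) * t)) ∘ Z (k + 1)
        from rfl, ← MeasurableSpace.comap_comp]
      exact MeasurableSpace.comap_mono (gA_cont lam alp t).measurable.comap_le
    · exact measurable_iff_comap_le.mp (hmeas k)
  -- integrability of the chain
  have hint : ∀ k, Integrable (oddsChain lam alp t φ Z k) μ := by
    intro k
    induction k with
    | zero => exact integrable_const φ
    | succ k ih =>
      have hmul : Integrable
          ((fun ω => Real.exp (alp * Z (k + 1) ω * Real.sqrt t + (lam - alp ^ 2 / 2) * t)) *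
            oddsChain lam alp t φ Z k) μ := (hIF k).integrable_mul (hgAi k) ih
      have : (oddsChain lam alp t φ Z (k + 1)) = fun ω =>
          Real.exp (alp * Z (k + 1) ω * Real.sqrt t + (lam - alp ^ 2 / 2) * t)
            * oddsChain lam alp t φ Z k ω + hB lam alp t (Z (k + 1) ω) := by
        funext ω
        exact jfun_eq_s13 lam alp t ht.le _ _
      rw [this]
      exact hmul.add (hBi k)
  -- main statement
  intro k hk
  obtain ⟨k, rfl⟩ : ∃ n, k = n + 1 := ⟨k - 1, (Nat.succ_pred_eq_of_pos hk).symm⟩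
  refine ⟨hint (k + 1), ?_⟩
  simp only [Nat.add_sub_cancel]
  set m := obsFiltration Z k with hmdef
  have hm := hle k
  haveI : SigmaFinite (μ.trim hm) := inferInstance
  set gZ : Ω → ℝ :=
    fun ω => Real.exp (alp * Z (k + 1) ω * Real.sqrt t + (lam - alp ^ 2 / 2) * t) with hgZ
  set hZf : Ω → ℝ := fun ω => hB lam alp t (Z (k + 1) ω) with hhZf
  set Φ : Ω → ℝ := oddsChain lam alp t φ Z k with hΦ
  have hrw : oddsChain lam alp t φ Z (k + 1) = Φ * gZ + hZf := by
    funext ω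
    show jfun lam alp t (Φ ω) (Z (k + 1) ω) = _
    rw [jfun_eq_s13 lam alp t ht.le]
    simp only [Pi.add_apply, Pi.mul_apply, hgZ, hhZf]
    ring
  have hmulint : Integrable (Φ * gZ) μ := by
    have := (hIF k).integrable_mul (hgAi k) (hint k)
    exact (mul_comm Φ gZ) ▸ this
  have hZmcomap : Measurable[MeasurableSpace.comap (Z (k + 1)) inferInstance] (Z (k + 1)) :=
    measurable_iff_comap_le.mpr le_rfl
  have hgZ_sm : StronglyMeasurable[MeasurableSpace.comap (Z (k + 1)) inferInstance] gZ :=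
    ((gA_cont lam alp t).measurable.comp hZmcomap).stronglyMeasurable
  have hhZ_sm : StronglyMeasurable[MeasurableSpace.comap (Z (k + 1)) inferInstance] hZf :=
    ((stronglyMeasurable_hB lam alp t).measurable.comp hZmcomap).stronglyMeasurable
  have hgZ_ce : μ[gZ|m] =ᵐ[μ] fun _ => Real.exp (lam * t) := by
    have h := condExp_indep_eq (μ := μ) (hZmeas (k + 1)).comap_le hm hgZ_sm (hindep k)
    have hval : μ[gZ] = Real.exp (lam * t) := by
      rw [hgZ]
      rw [hcomp_integral _ k (gA_cont lam alp t).aestronglyMeasurable]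
      exact integral_gA lam alp t ht.le
    rw [hval] at h
    exact h
  have hhZ_ce : μ[hZf|m] =ᵐ[μ] fun _ => Real.exp (lam * t) - 1 := by
    have h := condExp_indep_eq (μ := μ) (hZmeas (k + 1)).comap_le hm hhZ_sm (hindep k)
    have hval : μ[hZf] = Real.exp (lam * t) - 1 := by
      rw [hhZf]
      rw [hcomp_integral _ k (stronglyMeasurable_hB lam alp t).aestronglyMeasurable]
      exact integral_hB lam alp t hlam halp ht
    rw [hval] at h
    exact h
  have hpull : μ[Φ * gZ|m] =ᵐ[μ] Φ * μ[gZ|m] :=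
    condExp_mul_of_stronglyMeasurable_left ((hmeas k).stronglyMeasurable) hmulint (hgAi k)
  have hadd : μ[oddsChain lam alp t φ Z (k + 1)|m] =ᵐ[μ] μ[Φ * gZ|m] + μ[hZf|m] := by
    rw [hrw]
    exact condExp_add hmulint (hBi k) m
  refine hadd.trans ?_
  filter_upwards [hpull, hgZ_ce, hhZ_ce] with ω h1 h2 h3
  simp only [Pi.add_apply, Pi.mul_apply] at *
  rw [h1, h2, h3]
  ring
end
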